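/- Assume A is indecomposable of indefinite type, let w = s 1 ∘ s 2 ∘ ⋯ ∘ s n be the Coxeter element, and let α be a positive imaginary root. Then w^l α ∈ Δ₊ for every integer l, and ht(w^l α) tends to infinity both as l → +∞ and as l → −∞. -/

import Mathlib

open Matrix Filter Pointwise

namespace KacMoodyPaper

variable {n : ℕ}

/-- `A` is a generalized Cartan matrix. -/
def IsGCM (A : Matrix (Fin n) (Fin n) ℤ) : Prop :=
  (∀ i, A i i = 2) ∧ (∀ i j, i ≠ j → A i j ≤ 0) ∧ (∀ i j, A i j = 0 ↔ A j i = 0)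

/-- The simple reflection `s i` as a linear map: `s i v = v - (A *ᵥ v) i • e i`. -/
def sMap (A : Matrix (Fin n) (Fin n) ℤ) (i : Fin n) : (Fin n → ℤ) →ₗ[ℤ] (Fin n → ℤ) where
  toFun v := v - (A.mulVec v i) • Pi.single i 1
  map_add' x y := by
    simp only [Matrix.mulVec_add, Pi.add_apply, add_smul]
    abel
  map_smul' c x := by
    simp only [Matrix.mulVec_smul, Pi.smul_apply, smul_eq_mul, RingHom.id_apply, smul_sub,
      smul_smul]

theorem sMap_involutive (A : Matrix (Fin n) (Fin n) ℤ) (i : Fin n) (h2 : A i i = 2)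
    (v : Fin n → ℤ) : sMap A i (sMap A i v) = v := by
  have hAe : A.mulVec (Pi.single i 1) i = A i i := by
    simp [Matrix.mulVec_single]
  simp only [sMap, LinearMap.coe_mk, AddHom.coe_mk, Matrix.mulVec_sub, Matrix.mulVec_smul,
    Pi.sub_apply, Pi.smul_apply, hAe, h2, smul_eq_mul]
  ring_nf

/-- The simple reflection `s i` as a `ℤ`-linear automorphism of `ℤ^n`
(determined by `s i (e j) = e j - A i j • e i`). -/
def s (A : Matrix (Fin n) (Fin n) ℤ) (h2 : ∀ i, A i i = 2) (i : Fin n) :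
    (Fin n → ℤ) ≃ₗ[ℤ] (Fin n → ℤ) :=
  LinearEquiv.ofLinear (sMap A i) (sMap A i)
    (LinearMap.ext fun v => sMap_involutive A i (h2 i) v)
    (LinearMap.ext fun v => sMap_involutive A i (h2 i) v)

/-- The Coxeter element `w = s 1 ∘ s 2 ∘ ⋯ ∘ s n` (applying `s n` first). -/
def cox (A : Matrix (Fin n) (Fin n) ℤ) (h2 : ∀ i, A i i = 2) :
    (Fin n → ℤ) ≃ₗ[ℤ] (Fin n → ℤ) :=
  (List.ofFn (fun i : Fin n => s A h2 i)).prod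

/-- The Weyl group: the subgroup of `GL(n, ℤ)` generated by the simple reflections. -/
def weyl (A : Matrix (Fin n) (Fin n) ℤ) (h2 : ∀ i, A i i = 2) :
    Subgroup ((Fin n → ℤ) ≃ₗ[ℤ] (Fin n → ℤ)) :=
  Subgroup.closure (Set.range (s A h2))

section Aux

variable (A : Matrix (Fin n) (Fin n) ℤ) (h2 : ∀ i, A i i = 2)

lemma s_apply (i : Fin n) (v : Fin n → ℤ) :
    s A h2 i v = v - (A.mulVec v i) • Pi.single i 1 := rfl

lemma s_apply_ne (i : Fin n) (v : Fin n → ℤ) {k : Fin n} (h : k ≠ i) :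
    (s A h2 i v) k = v k := by
  simp [s_apply, Pi.single_eq_of_ne h]

lemma s_mul_self (i : Fin n) : s A h2 i * s A h2 i = 1 := by
  apply LinearEquiv.ext
  intro v
  exact sMap_involutive A i (h2 i) v

lemma s_inv (i : Fin n) : (s A h2 i)⁻¹ = s A h2 i :=
  inv_eq_of_mul_eq_one_right (s_mul_self A h2 i)

lemma s_mem_weyl (i : Fin n) : s A h2 i ∈ weyl A h2 :=
  Subgroup.subset_closure ⟨i, rfl⟩

/-- `g` is represented by the word `l`. -/
def isWord (g : (Fin n → ℤ) ≃ₗ[ℤ] (Fin n → ℤ)) (l : List (Fin n)) : Prop :=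
  g = (l.map (s A h2)).prod

/-- word length -/
noncomputable def wlen (g : (Fin n → ℤ) ≃ₗ[ℤ] (Fin n → ℤ)) : ℕ :=
  sInf {k | ∃ l, l.length = k ∧ isWord A h2 g l}

lemma isWord_nil : isWord A h2 1 [] := rfl

lemma isWord_single (i : Fin n) : isWord A h2 (s A h2 i) [i] := by
  simp [isWord]

lemma isWord_mul {g g' l l'} (hg : isWord A h2 g l) (hg' : isWord A h2 g' l') :
    isWord A h2 (g * g') (l ++ l') := by
  unfold isWord at *
  rw [hg, hg', List.map_append, List.prod_append]

lemma isWord_mem_weyl {g l} (hg : isWord A h2 g l) : g ∈ weyl A h2 := by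
  subst hg
  induction l with
  | nil => exact one_mem _
  | cons a t ih =>
      rw [List.map_cons, List.prod_cons]
      exact mul_mem (s_mem_weyl A h2 a) ih

lemma mem_weyl_word {g} (hg : g ∈ weyl A h2) : ∃ l, isWord A h2 g l := by
  induction hg using Subgroup.closure_induction with
  | mem x hx => obtain ⟨i, rfl⟩ := hx; exact ⟨[i], isWord_single A h2 i⟩
  | one => exact ⟨[], isWord_nil A h2⟩
  | mul x y hx hy ihx ihy =>
      obtain ⟨l, hl⟩ := ihx; obtain ⟨l', hl'⟩ := ihy
      exact ⟨l ++ l', isWord_mul A h2 hl hl'⟩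
  | inv x hx ihx =>
      obtain ⟨l, hl⟩ := ihx
      refine ⟨l.reverse, ?_⟩
      unfold isWord at *
      rw [hl, List.prod_inv_reverse]
      simp only [← List.map_reverse, List.map_map]
      have hfun : ((fun x => x⁻¹) ∘ s A h2 : Fin n → _) = s A h2 := by
        funext u; exact s_inv A h2 u
      rw [hfun]

lemma wlen_le {g : (Fin n → ℤ) ≃ₗ[ℤ] (Fin n → ℤ)} {l} (h : isWord A h2 g l) :
    wlen A h2 g ≤ l.length :=
  Nat.sInf_le ⟨l, rfl, h⟩

lemma wlen_spec {g : (Fin n → ℤ) ≃ₗ[ℤ] (Fin n → ℤ)} (hg : g ∈ weyl A h2) :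
    ∃ l, isWord A h2 g l ∧ l.length = wlen A h2 g := by
  have hne : {k | ∃ l, l.length = k ∧ isWord A h2 g l}.Nonempty := by
    obtain ⟨l, hl⟩ := mem_weyl_word A h2 hg
    exact ⟨l.length, l, rfl, hl⟩
  obtain ⟨l, hl, hw⟩ := Nat.sInf_mem hne
  exact ⟨l, hw, hl⟩

lemma eq_one_of_wlen_zero {g : (Fin n → ℤ) ≃ₗ[ℤ] (Fin n → ℤ)} (hg : g ∈ weyl A h2)
    (h : wlen A h2 g = 0) : g = 1 := by
  obtain ⟨l, hl, hlen⟩ := wlen_spec A h2 hg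
  rw [h, List.length_eq_zero_iff] at hlen
  subst hlen
  exact hl

lemma wlen_mul_le {g g' : (Fin n → ℤ) ≃ₗ[ℤ] (Fin n → ℤ)} (hg : g ∈ weyl A h2)
    (hg' : g' ∈ weyl A h2) : wlen A h2 (g * g') ≤ wlen A h2 g + wlen A h2 g' := by
  obtain ⟨l, hl, hlen⟩ := wlen_spec A h2 hg
  obtain ⟨l', hl', hlen'⟩ := wlen_spec A h2 hg'
  calc wlen A h2 (g * g') ≤ (l ++ l').length := wlen_le A h2 (isWord_mul A h2 hl hl')
  _ = _ := by rw [List.length_append, hlen, hlen']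

lemma wlen_mul_s_le {g : (Fin n → ℤ) ≃ₗ[ℤ] (Fin n → ℤ)} (hg : g ∈ weyl A h2) (i : Fin n) :
    wlen A h2 g ≤ wlen A h2 (g * s A h2 i) + 1 := by
  have h1 : g = (g * s A h2 i) * s A h2 i := by
    rw [mul_assoc, s_mul_self, mul_one]
  calc wlen A h2 g = wlen A h2 ((g * s A h2 i) * s A h2 i) := by rw [← h1]
  _ ≤ wlen A h2 (g * s A h2 i) + wlen A h2 (s A h2 i) :=
      wlen_mul_le A h2 (mul_mem hg (s_mem_weyl A h2 i)) (s_mem_weyl A h2 i)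
  _ ≤ wlen A h2 (g * s A h2 i) + 1 := by
      have : wlen A h2 (s A h2 i) ≤ 1 := by
        simpa using wlen_le A h2 (isWord_single A h2 i)
      omega

lemma exists_descent {g : (Fin n → ℤ) ≃ₗ[ℤ] (Fin n → ℤ)} (hg : g ∈ weyl A h2)
    (h : wlen A h2 g ≠ 0) : ∃ j, wlen A h2 (g * s A h2 j) + 1 ≤ wlen A h2 g := by
  obtain ⟨l, hl, hlen⟩ := wlen_spec A h2 hg
  rcases List.eq_nil_or_concat l with rfl | ⟨l', j, rfl⟩
  · simp at hlen; omega
  · refine ⟨j, ?_⟩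
    have hw : isWord A h2 (g * s A h2 j) l' := by
      unfold isWord at hl ⊢
      rw [List.concat_eq_append, List.map_append, List.prod_append] at hl
      simp only [List.map_cons, List.map_nil, List.prod_cons, List.prod_nil, mul_one] at hl
      rw [hl, mul_assoc, s_mul_self, mul_one]
    have := wlen_le A h2 hw
    rw [List.concat_eq_append, List.length_append] at hlen
    simp at hlen
    omega

lemma s_apply_combo (i j : Fin n) (v : Fin n → ℤ) (x y : ℤ) :
    s A h2 i (v + x • (Pi.single i 1 : Fin n → ℤ) + y • (Pi.single j 1 : Fin n → ℤ))
      = v + ((-(A i j)) * y - x - A.mulVec v i) • (Pi.single i 1 : Fin n → ℤ)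
          + y • (Pi.single j 1 : Fin n → ℤ) := by
  have hmv : A.mulVec (v + x • (Pi.single i 1 : Fin n → ℤ)
      + y • (Pi.single j 1 : Fin n → ℤ)) i = A.mulVec v i + 2 * x + A i j * y := by
    simp only [Matrix.mulVec_add, Matrix.mulVec_smul, Pi.add_apply, Pi.smul_apply,
      smul_eq_mul, Matrix.mulVec_single]
    simp only [MulOpposite.op_one, one_smul, Matrix.col_apply]
    rw [h2 i]
    ring
  rw [s_apply, hmv]
  module

/-- alternating group elements: `dseq (t+1) = s j * s i * s j * ⋯` (t+1 factors,
rightmost `s j`). -/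
def dseq (i j : Fin n) : ℕ → ((Fin n → ℤ) ≃ₗ[ℤ] (Fin n → ℤ))
  | 0 => 1
  | t+1 => (if t % 2 = 0 then s A h2 j else s A h2 i) * dseq i j t

/-- coefficients of `dseq t (e i)` in terms of `e i, e j`. -/
def pqSeq (a b : ℤ) : ℕ → ℤ × ℤ
  | 0 => (1, 0)
  | t+1 => if t % 2 = 0 then ((pqSeq a b t).1, b * (pqSeq a b t).1 - (pqSeq a b t).2)
           else (a * (pqSeq a b t).2 - (pqSeq a b t).1, (pqSeq a b t).2)

lemma dseq_mem_weyl (i j : Fin n) (t : ℕ) : dseq A h2 i j t ∈ weyl A h2 := by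
  induction t with
  | zero => exact one_mem _
  | succ t ih =>
      unfold dseq
      split <;> exact mul_mem (s_mem_weyl A h2 _) ih

lemma dseq_word (i j : Fin n) (t : ℕ) :
    ∃ l : List (Fin n), l.length = t ∧ isWord A h2 (dseq A h2 i j t) l := by
  induction t with
  | zero => exact ⟨[], rfl, isWord_nil A h2⟩
  | succ t ih =>
      obtain ⟨l, hl, hw⟩ := ih
      refine ⟨(if t % 2 = 0 then j else i) :: l, by simp [hl], ?_⟩
      unfold dseq
      have : ((if t % 2 = 0 then j else i) :: l) = [if t % 2 = 0 then j else i] ++ l := rfl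
      rw [this]
      split
      · exact isWord_mul A h2 (by simpa using isWord_single A h2 j) hw
      · exact isWord_mul A h2 (by simpa using isWord_single A h2 i) hw

lemma dseq_succ_inv (i j : Fin n) (t : ℕ) :
    (dseq A h2 i j (t+1))⁻¹ = (dseq A h2 i j t)⁻¹ * (if t % 2 = 0 then s A h2 j else s A h2 i) := by
  have hd : dseq A h2 i j (t+1) = (if t % 2 = 0 then s A h2 j else s A h2 i) * dseq A h2 i j t :=
    rfl
  rw [hd, _root_.mul_inv_rev]
  congr 1
  split <;> exact s_inv A h2 _

lemma dseq_apply_single (i j : Fin n) (a b : ℤ) (ha : A i j = -a) (hb : A j i = -b) (t : ℕ) :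
    dseq A h2 i j t (Pi.single i 1) =
      (pqSeq a b t).1 • (Pi.single i 1 : Fin n → ℤ)
        + (pqSeq a b t).2 • (Pi.single j 1 : Fin n → ℤ) := by
  induction t with
  | zero =>
      show (Pi.single i 1 : Fin n → ℤ) = _
      unfold pqSeq
      module
  | succ t ih =>
      have happ : dseq A h2 i j (t+1) (Pi.single i 1)
          = (if t % 2 = 0 then s A h2 j else s A h2 i) (dseq A h2 i j t (Pi.single i 1)) := rfl
      have hpq : pqSeq a b (t+1) = if t % 2 = 0 then
            ((pqSeq a b t).1, b * (pqSeq a b t).1 - (pqSeq a b t).2)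
          else (a * (pqSeq a b t).2 - (pqSeq a b t).1, (pqSeq a b t).2) := rfl
      rcases Nat.even_or_odd t with he | ho
      · have ht : t % 2 = 0 := Nat.even_iff.mp he
        rw [happ, ih, if_pos ht, hpq, if_pos ht]
        have e1 : (pqSeq a b t).1 • (Pi.single i 1 : Fin n → ℤ)
            + (pqSeq a b t).2 • (Pi.single j 1 : Fin n → ℤ)
            = 0 + (pqSeq a b t).2 • (Pi.single j 1 : Fin n → ℤ)
              + (pqSeq a b t).1 • (Pi.single i 1 : Fin n → ℤ) := by module
        rw [e1, s_apply_combo A h2 j i, hb, Matrix.mulVec_zero]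
        simp only [Pi.zero_apply]
        module
      · have ht : ¬ (t % 2 = 0) := by
          rw [Nat.odd_iff] at ho; omega
        rw [happ, ih, if_neg ht, hpq, if_neg ht]
        have e1 : (pqSeq a b t).1 • (Pi.single i 1 : Fin n → ℤ)
            + (pqSeq a b t).2 • (Pi.single j 1 : Fin n → ℤ)
            = 0 + (pqSeq a b t).1 • (Pi.single i 1 : Fin n → ℤ)
              + (pqSeq a b t).2 • (Pi.single j 1 : Fin n → ℤ) := by module
        rw [e1, s_apply_combo A h2 i j, ha, Matrix.mulVec_zero]
        simp only [Pi.zero_apply]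
        module

lemma stepI (i j : Fin n) (a : ℤ) (ha : A i j = -a) (v : Fin n → ℤ) (x y x' : ℤ)
    (hx : x' = a * y - x - A.mulVec v i) :
    s A h2 i (v + x • (Pi.single i 1 : Fin n → ℤ) + y • (Pi.single j 1 : Fin n → ℤ))
      = v + x' • (Pi.single i 1 : Fin n → ℤ) + y • (Pi.single j 1 : Fin n → ℤ) := by
  rw [s_apply_combo A h2 i j, ha, hx]
  module

lemma stepJ (i j : Fin n) (b : ℤ) (hb : A j i = -b) (v : Fin n → ℤ) (x y y' : ℤ)
    (hy : y' = b * x - y - A.mulVec v j) :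
    s A h2 j (v + x • (Pi.single i 1 : Fin n → ℤ) + y • (Pi.single j 1 : Fin n → ℤ))
      = v + x • (Pi.single i 1 : Fin n → ℤ) + y' • (Pi.single j 1 : Fin n → ℤ) := by
  have e : v + x • (Pi.single i 1 : Fin n → ℤ) + y • (Pi.single j 1 : Fin n → ℤ)
      = v + y • (Pi.single j 1 : Fin n → ℤ) + x • (Pi.single i 1 : Fin n → ℤ) := by module
  rw [e, s_apply_combo A h2 j i, hb, hy]
  module
lemma rel_0_0 (i j : Fin n) (ha : A i j = -0) (hb : A j i = -0) :
    (s A h2 i * s A h2 j)^2 = 1 := by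
  apply LinearEquiv.ext
  intro v
  show s A h2 i (s A h2 j (s A h2 i (s A h2 j (v)))) = (1 : (Fin n → ℤ) ≃ₗ[ℤ] (Fin n → ℤ)) v
  have h0 : v = v + ((0) + (0) * A.mulVec v i + (0) * A.mulVec v j : ℤ) • (Pi.single i 1 : Fin n → ℤ) + ((0) + (0) * A.mulVec v i + (0) * A.mulVec v j : ℤ) • (Pi.single j 1 : Fin n → ℤ) := by module
  have t1 : s A h2 j (v) = v + ((0) + (0) * A.mulVec v i + (0) * A.mulVec v j : ℤ) • (Pi.single i 1 : Fin n → ℤ) + ((0) + (0) * A.mulVec v i + (-1) * A.mulVec v j : ℤ) • (Pi.single j 1 : Fin n → ℤ) := by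
    conv_lhs => rw [h0]
    exact stepJ A h2 i j 0 hb v ((0) + (0) * A.mulVec v i + (0) * A.mulVec v j : ℤ) ((0) + (0) * A.mulVec v i + (0) * A.mulVec v j : ℤ) ((0) + (0) * A.mulVec v i + (-1) * A.mulVec v j : ℤ) (by ring)
  have t2 : s A h2 i (s A h2 j (v)) = v + ((0) + (-1) * A.mulVec v i + (0) * A.mulVec v j : ℤ) • (Pi.single i 1 : Fin n → ℤ) + ((0) + (0) * A.mulVec v i + (-1) * A.mulVec v j : ℤ) • (Pi.single j 1 : Fin n → ℤ) := by
    rw [t1]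
    exact stepI A h2 i j 0 ha v ((0) + (0) * A.mulVec v i + (0) * A.mulVec v j : ℤ) ((0) + (0) * A.mulVec v i + (-1) * A.mulVec v j : ℤ) ((0) + (-1) * A.mulVec v i + (0) * A.mulVec v j : ℤ) (by ring)
  have t3 : s A h2 j (s A h2 i (s A h2 j (v))) = v + ((0) + (-1) * A.mulVec v i + (0) * A.mulVec v j : ℤ) • (Pi.single i 1 : Fin n → ℤ) + ((0) + (0) * A.mulVec v i + (0) * A.mulVec v j : ℤ) • (Pi.single j 1 : Fin n → ℤ) := by
    rw [t2]
    exact stepJ A h2 i j 0 hb v ((0) + (-1) * A.mulVec v i + (0) * A.mulVec v j : ℤ) ((0) + (0) * A.mulVec v i + (-1) * A.mulVec v j : ℤ) ((0) + (0) * A.mulVec v i + (0) * A.mulVec v j : ℤ) (by ring)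
  have t4 : s A h2 i (s A h2 j (s A h2 i (s A h2 j (v)))) = v + ((0) + (0) * A.mulVec v i + (0) * A.mulVec v j : ℤ) • (Pi.single i 1 : Fin n → ℤ) + ((0) + (0) * A.mulVec v i + (0) * A.mulVec v j : ℤ) • (Pi.single j 1 : Fin n → ℤ) := by
    rw [t3]
    exact stepI A h2 i j 0 ha v ((0) + (-1) * A.mulVec v i + (0) * A.mulVec v j : ℤ) ((0) + (0) * A.mulVec v i + (0) * A.mulVec v j : ℤ) ((0) + (0) * A.mulVec v i + (0) * A.mulVec v j : ℤ) (by ring)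
  rw [t4]
  show _ = v
  module

lemma rel_1_1 (i j : Fin n) (ha : A i j = -1) (hb : A j i = -1) :
    (s A h2 i * s A h2 j)^3 = 1 := by
  apply LinearEquiv.ext
  intro v
  show s A h2 i (s A h2 j (s A h2 i (s A h2 j (s A h2 i (s A h2 j (v)))))) = (1 : (Fin n → ℤ) ≃ₗ[ℤ] (Fin n → ℤ)) v
  have h0 : v = v + ((0) + (0) * A.mulVec v i + (0) * A.mulVec v j : ℤ) • (Pi.single i 1 : Fin n → ℤ) + ((0) + (0) * A.mulVec v i + (0) * A.mulVec v j : ℤ) • (Pi.single j 1 : Fin n → ℤ) := by module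
  have t1 : s A h2 j (v) = v + ((0) + (0) * A.mulVec v i + (0) * A.mulVec v j : ℤ) • (Pi.single i 1 : Fin n → ℤ) + ((0) + (0) * A.mulVec v i + (-1) * A.mulVec v j : ℤ) • (Pi.single j 1 : Fin n → ℤ) := by
    conv_lhs => rw [h0]
    exact stepJ A h2 i j 1 hb v ((0) + (0) * A.mulVec v i + (0) * A.mulVec v j : ℤ) ((0) + (0) * A.mulVec v i + (0) * A.mulVec v j : ℤ) ((0) + (0) * A.mulVec v i + (-1) * A.mulVec v j : ℤ) (by ring)
  have t2 : s A h2 i (s A h2 j (v)) = v + ((0) + (-1) * A.mulVec v i + (-1) * A.mulVec v j : ℤ) • (Pi.single i 1 : Fin n → ℤ) + ((0) + (0) * A.mulVec v i + (-1) * A.mulVec v j : ℤ) • (Pi.single j 1 : Fin n → ℤ) := by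
    rw [t1]
    exact stepI A h2 i j 1 ha v ((0) + (0) * A.mulVec v i + (0) * A.mulVec v j : ℤ) ((0) + (0) * A.mulVec v i + (-1) * A.mulVec v j : ℤ) ((0) + (-1) * A.mulVec v i + (-1) * A.mulVec v j : ℤ) (by ring)
  have t3 : s A h2 j (s A h2 i (s A h2 j (v))) = v + ((0) + (-1) * A.mulVec v i + (-1) * A.mulVec v j : ℤ) • (Pi.single i 1 : Fin n → ℤ) + ((0) + (-1) * A.mulVec v i + (-1) * A.mulVec v j : ℤ) • (Pi.single j 1 : Fin n → ℤ) := by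
    rw [t2]
    exact stepJ A h2 i j 1 hb v ((0) + (-1) * A.mulVec v i + (-1) * A.mulVec v j : ℤ) ((0) + (0) * A.mulVec v i + (-1) * A.mulVec v j : ℤ) ((0) + (-1) * A.mulVec v i + (-1) * A.mulVec v j : ℤ) (by ring)
  have t4 : s A h2 i (s A h2 j (s A h2 i (s A h2 j (v)))) = v + ((0) + (-1) * A.mulVec v i + (0) * A.mulVec v j : ℤ) • (Pi.single i 1 : Fin n → ℤ) + ((0) + (-1) * A.mulVec v i + (-1) * A.mulVec v j : ℤ) • (Pi.single j 1 : Fin n → ℤ) := by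
    rw [t3]
    exact stepI A h2 i j 1 ha v ((0) + (-1) * A.mulVec v i + (-1) * A.mulVec v j : ℤ) ((0) + (-1) * A.mulVec v i + (-1) * A.mulVec v j : ℤ) ((0) + (-1) * A.mulVec v i + (0) * A.mulVec v j : ℤ) (by ring)
  have t5 : s A h2 j (s A h2 i (s A h2 j (s A h2 i (s A h2 j (v))))) = v + ((0) + (-1) * A.mulVec v i + (0) * A.mulVec v j : ℤ) • (Pi.single i 1 : Fin n → ℤ) + ((0) + (0) * A.mulVec v i + (0) * A.mulVec v j : ℤ) • (Pi.single j 1 : Fin n → ℤ) := by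
    rw [t4]
    exact stepJ A h2 i j 1 hb v ((0) + (-1) * A.mulVec v i + (0) * A.mulVec v j : ℤ) ((0) + (-1) * A.mulVec v i + (-1) * A.mulVec v j : ℤ) ((0) + (0) * A.mulVec v i + (0) * A.mulVec v j : ℤ) (by ring)
  have t6 : s A h2 i (s A h2 j (s A h2 i (s A h2 j (s A h2 i (s A h2 j (v)))))) = v + ((0) + (0) * A.mulVec v i + (0) * A.mulVec v j : ℤ) • (Pi.single i 1 : Fin n → ℤ) + ((0) + (0) * A.mulVec v i + (0) * A.mulVec v j : ℤ) • (Pi.single j 1 : Fin n → ℤ) := by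
    rw [t5]
    exact stepI A h2 i j 1 ha v ((0) + (-1) * A.mulVec v i + (0) * A.mulVec v j : ℤ) ((0) + (0) * A.mulVec v i + (0) * A.mulVec v j : ℤ) ((0) + (0) * A.mulVec v i + (0) * A.mulVec v j : ℤ) (by ring)
  rw [t6]
  show _ = v
  module

lemma rel_1_2 (i j : Fin n) (ha : A i j = -1) (hb : A j i = -2) :
    (s A h2 i * s A h2 j)^4 = 1 := by
  apply LinearEquiv.ext
  intro v
  show s A h2 i (s A h2 j (s A h2 i (s A h2 j (s A h2 i (s A h2 j (s A h2 i (s A h2 j (v)))))))) = (1 : (Fin n → ℤ) ≃ₗ[ℤ] (Fin n → ℤ)) v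
  have h0 : v = v + ((0) + (0) * A.mulVec v i + (0) * A.mulVec v j : ℤ) • (Pi.single i 1 : Fin n → ℤ) + ((0) + (0) * A.mulVec v i + (0) * A.mulVec v j : ℤ) • (Pi.single j 1 : Fin n → ℤ) := by module
  have t1 : s A h2 j (v) = v + ((0) + (0) * A.mulVec v i + (0) * A.mulVec v j : ℤ) • (Pi.single i 1 : Fin n → ℤ) + ((0) + (0) * A.mulVec v i + (-1) * A.mulVec v j : ℤ) • (Pi.single j 1 : Fin n → ℤ) := by
    conv_lhs => rw [h0]
    exact stepJ A h2 i j 2 hb v ((0) + (0) * A.mulVec v i + (0) * A.mulVec v j : ℤ) ((0) + (0) * A.mulVec v i + (0) * A.mulVec v j : ℤ) ((0) + (0) * A.mulVec v i + (-1) * A.mulVec v j : ℤ) (by ring)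
  have t2 : s A h2 i (s A h2 j (v)) = v + ((0) + (-1) * A.mulVec v i + (-1) * A.mulVec v j : ℤ) • (Pi.single i 1 : Fin n → ℤ) + ((0) + (0) * A.mulVec v i + (-1) * A.mulVec v j : ℤ) • (Pi.single j 1 : Fin n → ℤ) := by
    rw [t1]
    exact stepI A h2 i j 1 ha v ((0) + (0) * A.mulVec v i + (0) * A.mulVec v j : ℤ) ((0) + (0) * A.mulVec v i + (-1) * A.mulVec v j : ℤ) ((0) + (-1) * A.mulVec v i + (-1) * A.mulVec v j : ℤ) (by ring)
  have t3 : s A h2 j (s A h2 i (s A h2 j (v))) = v + ((0) + (-1) * A.mulVec v i + (-1) * A.mulVec v j : ℤ) • (Pi.single i 1 : Fin n → ℤ) + ((0) + (-2) * A.mulVec v i + (-2) * A.mulVec v j : ℤ) • (Pi.single j 1 : Fin n → ℤ) := by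
    rw [t2]
    exact stepJ A h2 i j 2 hb v ((0) + (-1) * A.mulVec v i + (-1) * A.mulVec v j : ℤ) ((0) + (0) * A.mulVec v i + (-1) * A.mulVec v j : ℤ) ((0) + (-2) * A.mulVec v i + (-2) * A.mulVec v j : ℤ) (by ring)
  have t4 : s A h2 i (s A h2 j (s A h2 i (s A h2 j (v)))) = v + ((0) + (-2) * A.mulVec v i + (-1) * A.mulVec v j : ℤ) • (Pi.single i 1 : Fin n → ℤ) + ((0) + (-2) * A.mulVec v i + (-2) * A.mulVec v j : ℤ) • (Pi.single j 1 : Fin n → ℤ) := by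
    rw [t3]
    exact stepI A h2 i j 1 ha v ((0) + (-1) * A.mulVec v i + (-1) * A.mulVec v j : ℤ) ((0) + (-2) * A.mulVec v i + (-2) * A.mulVec v j : ℤ) ((0) + (-2) * A.mulVec v i + (-1) * A.mulVec v j : ℤ) (by ring)
  have t5 : s A h2 j (s A h2 i (s A h2 j (s A h2 i (s A h2 j (v))))) = v + ((0) + (-2) * A.mulVec v i + (-1) * A.mulVec v j : ℤ) • (Pi.single i 1 : Fin n → ℤ) + ((0) + (-2) * A.mulVec v i + (-1) * A.mulVec v j : ℤ) • (Pi.single j 1 : Fin n → ℤ) := by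
    rw [t4]
    exact stepJ A h2 i j 2 hb v ((0) + (-2) * A.mulVec v i + (-1) * A.mulVec v j : ℤ) ((0) + (-2) * A.mulVec v i + (-2) * A.mulVec v j : ℤ) ((0) + (-2) * A.mulVec v i + (-1) * A.mulVec v j : ℤ) (by ring)
  have t6 : s A h2 i (s A h2 j (s A h2 i (s A h2 j (s A h2 i (s A h2 j (v)))))) = v + ((0) + (-1) * A.mulVec v i + (0) * A.mulVec v j : ℤ) • (Pi.single i 1 : Fin n → ℤ) + ((0) + (-2) * A.mulVec v i + (-1) * A.mulVec v j : ℤ) • (Pi.single j 1 : Fin n → ℤ) := by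
    rw [t5]
    exact stepI A h2 i j 1 ha v ((0) + (-2) * A.mulVec v i + (-1) * A.mulVec v j : ℤ) ((0) + (-2) * A.mulVec v i + (-1) * A.mulVec v j : ℤ) ((0) + (-1) * A.mulVec v i + (0) * A.mulVec v j : ℤ) (by ring)
  have t7 : s A h2 j (s A h2 i (s A h2 j (s A h2 i (s A h2 j (s A h2 i (s A h2 j (v))))))) = v + ((0) + (-1) * A.mulVec v i + (0) * A.mulVec v j : ℤ) • (Pi.single i 1 : Fin n → ℤ) + ((0) + (0) * A.mulVec v i + (0) * A.mulVec v j : ℤ) • (Pi.single j 1 : Fin n → ℤ) := by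
    rw [t6]
    exact stepJ A h2 i j 2 hb v ((0) + (-1) * A.mulVec v i + (0) * A.mulVec v j : ℤ) ((0) + (-2) * A.mulVec v i + (-1) * A.mulVec v j : ℤ) ((0) + (0) * A.mulVec v i + (0) * A.mulVec v j : ℤ) (by ring)
  have t8 : s A h2 i (s A h2 j (s A h2 i (s A h2 j (s A h2 i (s A h2 j (s A h2 i (s A h2 j (v)))))))) = v + ((0) + (0) * A.mulVec v i + (0) * A.mulVec v j : ℤ) • (Pi.single i 1 : Fin n → ℤ) + ((0) + (0) * A.mulVec v i + (0) * A.mulVec v j : ℤ) • (Pi.single j 1 : Fin n → ℤ) := by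
    rw [t7]
    exact stepI A h2 i j 1 ha v ((0) + (-1) * A.mulVec v i + (0) * A.mulVec v j : ℤ) ((0) + (0) * A.mulVec v i + (0) * A.mulVec v j : ℤ) ((0) + (0) * A.mulVec v i + (0) * A.mulVec v j : ℤ) (by ring)
  rw [t8]
  show _ = v
  module

lemma rel_2_1 (i j : Fin n) (ha : A i j = -2) (hb : A j i = -1) :
    (s A h2 i * s A h2 j)^4 = 1 := by
  apply LinearEquiv.ext
  intro v
  show s A h2 i (s A h2 j (s A h2 i (s A h2 j (s A h2 i (s A h2 j (s A h2 i (s A h2 j (v)))))))) = (1 : (Fin n → ℤ) ≃ₗ[ℤ] (Fin n → ℤ)) v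
  have h0 : v = v + ((0) + (0) * A.mulVec v i + (0) * A.mulVec v j : ℤ) • (Pi.single i 1 : Fin n → ℤ) + ((0) + (0) * A.mulVec v i + (0) * A.mulVec v j : ℤ) • (Pi.single j 1 : Fin n → ℤ) := by module
  have t1 : s A h2 j (v) = v + ((0) + (0) * A.mulVec v i + (0) * A.mulVec v j : ℤ) • (Pi.single i 1 : Fin n → ℤ) + ((0) + (0) * A.mulVec v i + (-1) * A.mulVec v j : ℤ) • (Pi.single j 1 : Fin n → ℤ) := by
    conv_lhs => rw [h0]
    exact stepJ A h2 i j 1 hb v ((0) + (0) * A.mulVec v i + (0) * A.mulVec v j : ℤ) ((0) + (0) * A.mulVec v i + (0) * A.mulVec v j : ℤ) ((0) + (0) * A.mulVec v i + (-1) * A.mulVec v j : ℤ) (by ring)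
  have t2 : s A h2 i (s A h2 j (v)) = v + ((0) + (-1) * A.mulVec v i + (-2) * A.mulVec v j : ℤ) • (Pi.single i 1 : Fin n → ℤ) + ((0) + (0) * A.mulVec v i + (-1) * A.mulVec v j : ℤ) • (Pi.single j 1 : Fin n → ℤ) := by
    rw [t1]
    exact stepI A h2 i j 2 ha v ((0) + (0) * A.mulVec v i + (0) * A.mulVec v j : ℤ) ((0) + (0) * A.mulVec v i + (-1) * A.mulVec v j : ℤ) ((0) + (-1) * A.mulVec v i + (-2) * A.mulVec v j : ℤ) (by ring)
  have t3 : s A h2 j (s A h2 i (s A h2 j (v))) = v + ((0) + (-1) * A.mulVec v i + (-2) * A.mulVec v j : ℤ) • (Pi.single i 1 : Fin n → ℤ) + ((0) + (-1) * A.mulVec v i + (-2) * A.mulVec v j : ℤ) • (Pi.single j 1 : Fin n → ℤ) := by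
    rw [t2]
    exact stepJ A h2 i j 1 hb v ((0) + (-1) * A.mulVec v i + (-2) * A.mulVec v j : ℤ) ((0) + (0) * A.mulVec v i + (-1) * A.mulVec v j : ℤ) ((0) + (-1) * A.mulVec v i + (-2) * A.mulVec v j : ℤ) (by ring)
  have t4 : s A h2 i (s A h2 j (s A h2 i (s A h2 j (v)))) = v + ((0) + (-2) * A.mulVec v i + (-2) * A.mulVec v j : ℤ) • (Pi.single i 1 : Fin n → ℤ) + ((0) + (-1) * A.mulVec v i + (-2) * A.mulVec v j : ℤ) • (Pi.single j 1 : Fin n → ℤ) := by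
    rw [t3]
    exact stepI A h2 i j 2 ha v ((0) + (-1) * A.mulVec v i + (-2) * A.mulVec v j : ℤ) ((0) + (-1) * A.mulVec v i + (-2) * A.mulVec v j : ℤ) ((0) + (-2) * A.mulVec v i + (-2) * A.mulVec v j : ℤ) (by ring)
  have t5 : s A h2 j (s A h2 i (s A h2 j (s A h2 i (s A h2 j (v))))) = v + ((0) + (-2) * A.mulVec v i + (-2) * A.mulVec v j : ℤ) • (Pi.single i 1 : Fin n → ℤ) + ((0) + (-1) * A.mulVec v i + (-1) * A.mulVec v j : ℤ) • (Pi.single j 1 : Fin n → ℤ) := by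
    rw [t4]
    exact stepJ A h2 i j 1 hb v ((0) + (-2) * A.mulVec v i + (-2) * A.mulVec v j : ℤ) ((0) + (-1) * A.mulVec v i + (-2) * A.mulVec v j : ℤ) ((0) + (-1) * A.mulVec v i + (-1) * A.mulVec v j : ℤ) (by ring)
  have t6 : s A h2 i (s A h2 j (s A h2 i (s A h2 j (s A h2 i (s A h2 j (v)))))) = v + ((0) + (-1) * A.mulVec v i + (0) * A.mulVec v j : ℤ) • (Pi.single i 1 : Fin n → ℤ) + ((0) + (-1) * A.mulVec v i + (-1) * A.mulVec v j : ℤ) • (Pi.single j 1 : Fin n → ℤ) := by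
    rw [t5]
    exact stepI A h2 i j 2 ha v ((0) + (-2) * A.mulVec v i + (-2) * A.mulVec v j : ℤ) ((0) + (-1) * A.mulVec v i + (-1) * A.mulVec v j : ℤ) ((0) + (-1) * A.mulVec v i + (0) * A.mulVec v j : ℤ) (by ring)
  have t7 : s A h2 j (s A h2 i (s A h2 j (s A h2 i (s A h2 j (s A h2 i (s A h2 j (v))))))) = v + ((0) + (-1) * A.mulVec v i + (0) * A.mulVec v j : ℤ) • (Pi.single i 1 : Fin n → ℤ) + ((0) + (0) * A.mulVec v i + (0) * A.mulVec v j : ℤ) • (Pi.single j 1 : Fin n → ℤ) := by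
    rw [t6]
    exact stepJ A h2 i j 1 hb v ((0) + (-1) * A.mulVec v i + (0) * A.mulVec v j : ℤ) ((0) + (-1) * A.mulVec v i + (-1) * A.mulVec v j : ℤ) ((0) + (0) * A.mulVec v i + (0) * A.mulVec v j : ℤ) (by ring)
  have t8 : s A h2 i (s A h2 j (s A h2 i (s A h2 j (s A h2 i (s A h2 j (s A h2 i (s A h2 j (v)))))))) = v + ((0) + (0) * A.mulVec v i + (0) * A.mulVec v j : ℤ) • (Pi.single i 1 : Fin n → ℤ) + ((0) + (0) * A.mulVec v i + (0) * A.mulVec v j : ℤ) • (Pi.single j 1 : Fin n → ℤ) := by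
    rw [t7]
    exact stepI A h2 i j 2 ha v ((0) + (-1) * A.mulVec v i + (0) * A.mulVec v j : ℤ) ((0) + (0) * A.mulVec v i + (0) * A.mulVec v j : ℤ) ((0) + (0) * A.mulVec v i + (0) * A.mulVec v j : ℤ) (by ring)
  rw [t8]
  show _ = v
  module

lemma rel_1_3 (i j : Fin n) (ha : A i j = -1) (hb : A j i = -3) :
    (s A h2 i * s A h2 j)^6 = 1 := by
  apply LinearEquiv.ext
  intro v
  show s A h2 i (s A h2 j (s A h2 i (s A h2 j (s A h2 i (s A h2 j (s A h2 i (s A h2 j (s A h2 i (s A h2 j (s A h2 i (s A h2 j (v)))))))))))) = (1 : (Fin n → ℤ) ≃ₗ[ℤ] (Fin n → ℤ)) v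
  have h0 : v = v + ((0) + (0) * A.mulVec v i + (0) * A.mulVec v j : ℤ) • (Pi.single i 1 : Fin n → ℤ) + ((0) + (0) * A.mulVec v i + (0) * A.mulVec v j : ℤ) • (Pi.single j 1 : Fin n → ℤ) := by module
  have t1 : s A h2 j (v) = v + ((0) + (0) * A.mulVec v i + (0) * A.mulVec v j : ℤ) • (Pi.single i 1 : Fin n → ℤ) + ((0) + (0) * A.mulVec v i + (-1) * A.mulVec v j : ℤ) • (Pi.single j 1 : Fin n → ℤ) := by
    conv_lhs => rw [h0]
    exact stepJ A h2 i j 3 hb v ((0) + (0) * A.mulVec v i + (0) * A.mulVec v j : ℤ) ((0) + (0) * A.mulVec v i + (0) * A.mulVec v j : ℤ) ((0) + (0) * A.mulVec v i + (-1) * A.mulVec v j : ℤ) (by ring)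
  have t2 : s A h2 i (s A h2 j (v)) = v + ((0) + (-1) * A.mulVec v i + (-1) * A.mulVec v j : ℤ) • (Pi.single i 1 : Fin n → ℤ) + ((0) + (0) * A.mulVec v i + (-1) * A.mulVec v j : ℤ) • (Pi.single j 1 : Fin n → ℤ) := by
    rw [t1]
    exact stepI A h2 i j 1 ha v ((0) + (0) * A.mulVec v i + (0) * A.mulVec v j : ℤ) ((0) + (0) * A.mulVec v i + (-1) * A.mulVec v j : ℤ) ((0) + (-1) * A.mulVec v i + (-1) * A.mulVec v j : ℤ) (by ring)
  have t3 : s A h2 j (s A h2 i (s A h2 j (v))) = v + ((0) + (-1) * A.mulVec v i + (-1) * A.mulVec v j : ℤ) • (Pi.single i 1 : Fin n → ℤ) + ((0) + (-3) * A.mulVec v i + (-3) * A.mulVec v j : ℤ) • (Pi.single j 1 : Fin n → ℤ) := by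
    rw [t2]
    exact stepJ A h2 i j 3 hb v ((0) + (-1) * A.mulVec v i + (-1) * A.mulVec v j : ℤ) ((0) + (0) * A.mulVec v i + (-1) * A.mulVec v j : ℤ) ((0) + (-3) * A.mulVec v i + (-3) * A.mulVec v j : ℤ) (by ring)
  have t4 : s A h2 i (s A h2 j (s A h2 i (s A h2 j (v)))) = v + ((0) + (-3) * A.mulVec v i + (-2) * A.mulVec v j : ℤ) • (Pi.single i 1 : Fin n → ℤ) + ((0) + (-3) * A.mulVec v i + (-3) * A.mulVec v j : ℤ) • (Pi.single j 1 : Fin n → ℤ) := by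
    rw [t3]
    exact stepI A h2 i j 1 ha v ((0) + (-1) * A.mulVec v i + (-1) * A.mulVec v j : ℤ) ((0) + (-3) * A.mulVec v i + (-3) * A.mulVec v j : ℤ) ((0) + (-3) * A.mulVec v i + (-2) * A.mulVec v j : ℤ) (by ring)
  have t5 : s A h2 j (s A h2 i (s A h2 j (s A h2 i (s A h2 j (v))))) = v + ((0) + (-3) * A.mulVec v i + (-2) * A.mulVec v j : ℤ) • (Pi.single i 1 : Fin n → ℤ) + ((0) + (-6) * A.mulVec v i + (-4) * A.mulVec v j : ℤ) • (Pi.single j 1 : Fin n → ℤ) := by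
    rw [t4]
    exact stepJ A h2 i j 3 hb v ((0) + (-3) * A.mulVec v i + (-2) * A.mulVec v j : ℤ) ((0) + (-3) * A.mulVec v i + (-3) * A.mulVec v j : ℤ) ((0) + (-6) * A.mulVec v i + (-4) * A.mulVec v j : ℤ) (by ring)
  have t6 : s A h2 i (s A h2 j (s A h2 i (s A h2 j (s A h2 i (s A h2 j (v)))))) = v + ((0) + (-4) * A.mulVec v i + (-2) * A.mulVec v j : ℤ) • (Pi.single i 1 : Fin n → ℤ) + ((0) + (-6) * A.mulVec v i + (-4) * A.mulVec v j : ℤ) • (Pi.single j 1 : Fin n → ℤ) := by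
    rw [t5]
    exact stepI A h2 i j 1 ha v ((0) + (-3) * A.mulVec v i + (-2) * A.mulVec v j : ℤ) ((0) + (-6) * A.mulVec v i + (-4) * A.mulVec v j : ℤ) ((0) + (-4) * A.mulVec v i + (-2) * A.mulVec v j : ℤ) (by ring)
  have t7 : s A h2 j (s A h2 i (s A h2 j (s A h2 i (s A h2 j (s A h2 i (s A h2 j (v))))))) = v + ((0) + (-4) * A.mulVec v i + (-2) * A.mulVec v j : ℤ) • (Pi.single i 1 : Fin n → ℤ) + ((0) + (-6) * A.mulVec v i + (-3) * A.mulVec v j : ℤ) • (Pi.single j 1 : Fin n → ℤ) := by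
    rw [t6]
    exact stepJ A h2 i j 3 hb v ((0) + (-4) * A.mulVec v i + (-2) * A.mulVec v j : ℤ) ((0) + (-6) * A.mulVec v i + (-4) * A.mulVec v j : ℤ) ((0) + (-6) * A.mulVec v i + (-3) * A.mulVec v j : ℤ) (by ring)
  have t8 : s A h2 i (s A h2 j (s A h2 i (s A h2 j (s A h2 i (s A h2 j (s A h2 i (s A h2 j (v)))))))) = v + ((0) + (-3) * A.mulVec v i + (-1) * A.mulVec v j : ℤ) • (Pi.single i 1 : Fin n → ℤ) + ((0) + (-6) * A.mulVec v i + (-3) * A.mulVec v j : ℤ) • (Pi.single j 1 : Fin n → ℤ) := by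
    rw [t7]
    exact stepI A h2 i j 1 ha v ((0) + (-4) * A.mulVec v i + (-2) * A.mulVec v j : ℤ) ((0) + (-6) * A.mulVec v i + (-3) * A.mulVec v j : ℤ) ((0) + (-3) * A.mulVec v i + (-1) * A.mulVec v j : ℤ) (by ring)
  have t9 : s A h2 j (s A h2 i (s A h2 j (s A h2 i (s A h2 j (s A h2 i (s A h2 j (s A h2 i (s A h2 j (v))))))))) = v + ((0) + (-3) * A.mulVec v i + (-1) * A.mulVec v j : ℤ) • (Pi.single i 1 : Fin n → ℤ) + ((0) + (-3) * A.mulVec v i + (-1) * A.mulVec v j : ℤ) • (Pi.single j 1 : Fin n → ℤ) := by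
    rw [t8]
    exact stepJ A h2 i j 3 hb v ((0) + (-3) * A.mulVec v i + (-1) * A.mulVec v j : ℤ) ((0) + (-6) * A.mulVec v i + (-3) * A.mulVec v j : ℤ) ((0) + (-3) * A.mulVec v i + (-1) * A.mulVec v j : ℤ) (by ring)
  have t10 : s A h2 i (s A h2 j (s A h2 i (s A h2 j (s A h2 i (s A h2 j (s A h2 i (s A h2 j (s A h2 i (s A h2 j (v)))))))))) = v + ((0) + (-1) * A.mulVec v i + (0) * A.mulVec v j : ℤ) • (Pi.single i 1 : Fin n → ℤ) + ((0) + (-3) * A.mulVec v i + (-1) * A.mulVec v j : ℤ) • (Pi.single j 1 : Fin n → ℤ) := by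
    rw [t9]
    exact stepI A h2 i j 1 ha v ((0) + (-3) * A.mulVec v i + (-1) * A.mulVec v j : ℤ) ((0) + (-3) * A.mulVec v i + (-1) * A.mulVec v j : ℤ) ((0) + (-1) * A.mulVec v i + (0) * A.mulVec v j : ℤ) (by ring)
  have t11 : s A h2 j (s A h2 i (s A h2 j (s A h2 i (s A h2 j (s A h2 i (s A h2 j (s A h2 i (s A h2 j (s A h2 i (s A h2 j (v))))))))))) = v + ((0) + (-1) * A.mulVec v i + (0) * A.mulVec v j : ℤ) • (Pi.single i 1 : Fin n → ℤ) + ((0) + (0) * A.mulVec v i + (0) * A.mulVec v j : ℤ) • (Pi.single j 1 : Fin n → ℤ) := by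
    rw [t10]
    exact stepJ A h2 i j 3 hb v ((0) + (-1) * A.mulVec v i + (0) * A.mulVec v j : ℤ) ((0) + (-3) * A.mulVec v i + (-1) * A.mulVec v j : ℤ) ((0) + (0) * A.mulVec v i + (0) * A.mulVec v j : ℤ) (by ring)
  have t12 : s A h2 i (s A h2 j (s A h2 i (s A h2 j (s A h2 i (s A h2 j (s A h2 i (s A h2 j (s A h2 i (s A h2 j (s A h2 i (s A h2 j (v)))))))))))) = v + ((0) + (0) * A.mulVec v i + (0) * A.mulVec v j : ℤ) • (Pi.single i 1 : Fin n → ℤ) + ((0) + (0) * A.mulVec v i + (0) * A.mulVec v j : ℤ) • (Pi.single j 1 : Fin n → ℤ) := by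
    rw [t11]
    exact stepI A h2 i j 1 ha v ((0) + (-1) * A.mulVec v i + (0) * A.mulVec v j : ℤ) ((0) + (0) * A.mulVec v i + (0) * A.mulVec v j : ℤ) ((0) + (0) * A.mulVec v i + (0) * A.mulVec v j : ℤ) (by ring)
  rw [t12]
  show _ = v
  module

lemma rel_3_1 (i j : Fin n) (ha : A i j = -3) (hb : A j i = -1) :
    (s A h2 i * s A h2 j)^6 = 1 := by
  apply LinearEquiv.ext
  intro v
  show s A h2 i (s A h2 j (s A h2 i (s A h2 j (s A h2 i (s A h2 j (s A h2 i (s A h2 j (s A h2 i (s A h2 j (s A h2 i (s A h2 j (v)))))))))))) = (1 : (Fin n → ℤ) ≃ₗ[ℤ] (Fin n → ℤ)) v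
  have h0 : v = v + ((0) + (0) * A.mulVec v i + (0) * A.mulVec v j : ℤ) • (Pi.single i 1 : Fin n → ℤ) + ((0) + (0) * A.mulVec v i + (0) * A.mulVec v j : ℤ) • (Pi.single j 1 : Fin n → ℤ) := by module
  have t1 : s A h2 j (v) = v + ((0) + (0) * A.mulVec v i + (0) * A.mulVec v j : ℤ) • (Pi.single i 1 : Fin n → ℤ) + ((0) + (0) * A.mulVec v i + (-1) * A.mulVec v j : ℤ) • (Pi.single j 1 : Fin n → ℤ) := by
    conv_lhs => rw [h0]
    exact stepJ A h2 i j 1 hb v ((0) + (0) * A.mulVec v i + (0) * A.mulVec v j : ℤ) ((0) + (0) * A.mulVec v i + (0) * A.mulVec v j : ℤ) ((0) + (0) * A.mulVec v i + (-1) * A.mulVec v j : ℤ) (by ring)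
  have t2 : s A h2 i (s A h2 j (v)) = v + ((0) + (-1) * A.mulVec v i + (-3) * A.mulVec v j : ℤ) • (Pi.single i 1 : Fin n → ℤ) + ((0) + (0) * A.mulVec v i + (-1) * A.mulVec v j : ℤ) • (Pi.single j 1 : Fin n → ℤ) := by
    rw [t1]
    exact stepI A h2 i j 3 ha v ((0) + (0) * A.mulVec v i + (0) * A.mulVec v j : ℤ) ((0) + (0) * A.mulVec v i + (-1) * A.mulVec v j : ℤ) ((0) + (-1) * A.mulVec v i + (-3) * A.mulVec v j : ℤ) (by ring)
  have t3 : s A h2 j (s A h2 i (s A h2 j (v))) = v + ((0) + (-1) * A.mulVec v i + (-3) * A.mulVec v j : ℤ) • (Pi.single i 1 : Fin n → ℤ) + ((0) + (-1) * A.mulVec v i + (-3) * A.mulVec v j : ℤ) • (Pi.single j 1 : Fin n → ℤ) := by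
    rw [t2]
    exact stepJ A h2 i j 1 hb v ((0) + (-1) * A.mulVec v i + (-3) * A.mulVec v j : ℤ) ((0) + (0) * A.mulVec v i + (-1) * A.mulVec v j : ℤ) ((0) + (-1) * A.mulVec v i + (-3) * A.mulVec v j : ℤ) (by ring)
  have t4 : s A h2 i (s A h2 j (s A h2 i (s A h2 j (v)))) = v + ((0) + (-3) * A.mulVec v i + (-6) * A.mulVec v j : ℤ) • (Pi.single i 1 : Fin n → ℤ) + ((0) + (-1) * A.mulVec v i + (-3) * A.mulVec v j : ℤ) • (Pi.single j 1 : Fin n → ℤ) := by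
    rw [t3]
    exact stepI A h2 i j 3 ha v ((0) + (-1) * A.mulVec v i + (-3) * A.mulVec v j : ℤ) ((0) + (-1) * A.mulVec v i + (-3) * A.mulVec v j : ℤ) ((0) + (-3) * A.mulVec v i + (-6) * A.mulVec v j : ℤ) (by ring)
  have t5 : s A h2 j (s A h2 i (s A h2 j (s A h2 i (s A h2 j (v))))) = v + ((0) + (-3) * A.mulVec v i + (-6) * A.mulVec v j : ℤ) • (Pi.single i 1 : Fin n → ℤ) + ((0) + (-2) * A.mulVec v i + (-4) * A.mulVec v j : ℤ) • (Pi.single j 1 : Fin n → ℤ) := by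
    rw [t4]
    exact stepJ A h2 i j 1 hb v ((0) + (-3) * A.mulVec v i + (-6) * A.mulVec v j : ℤ) ((0) + (-1) * A.mulVec v i + (-3) * A.mulVec v j : ℤ) ((0) + (-2) * A.mulVec v i + (-4) * A.mulVec v j : ℤ) (by ring)
  have t6 : s A h2 i (s A h2 j (s A h2 i (s A h2 j (s A h2 i (s A h2 j (v)))))) = v + ((0) + (-4) * A.mulVec v i + (-6) * A.mulVec v j : ℤ) • (Pi.single i 1 : Fin n → ℤ) + ((0) + (-2) * A.mulVec v i + (-4) * A.mulVec v j : ℤ) • (Pi.single j 1 : Fin n → ℤ) := by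
    rw [t5]
    exact stepI A h2 i j 3 ha v ((0) + (-3) * A.mulVec v i + (-6) * A.mulVec v j : ℤ) ((0) + (-2) * A.mulVec v i + (-4) * A.mulVec v j : ℤ) ((0) + (-4) * A.mulVec v i + (-6) * A.mulVec v j : ℤ) (by ring)
  have t7 : s A h2 j (s A h2 i (s A h2 j (s A h2 i (s A h2 j (s A h2 i (s A h2 j (v))))))) = v + ((0) + (-4) * A.mulVec v i + (-6) * A.mulVec v j : ℤ) • (Pi.single i 1 : Fin n → ℤ) + ((0) + (-2) * A.mulVec v i + (-3) * A.mulVec v j : ℤ) • (Pi.single j 1 : Fin n → ℤ) := by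
    rw [t6]
    exact stepJ A h2 i j 1 hb v ((0) + (-4) * A.mulVec v i + (-6) * A.mulVec v j : ℤ) ((0) + (-2) * A.mulVec v i + (-4) * A.mulVec v j : ℤ) ((0) + (-2) * A.mulVec v i + (-3) * A.mulVec v j : ℤ) (by ring)
  have t8 : s A h2 i (s A h2 j (s A h2 i (s A h2 j (s A h2 i (s A h2 j (s A h2 i (s A h2 j (v)))))))) = v + ((0) + (-3) * A.mulVec v i + (-3) * A.mulVec v j : ℤ) • (Pi.single i 1 : Fin n → ℤ) + ((0) + (-2) * A.mulVec v i + (-3) * A.mulVec v j : ℤ) • (Pi.single j 1 : Fin n → ℤ) := by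
    rw [t7]
    exact stepI A h2 i j 3 ha v ((0) + (-4) * A.mulVec v i + (-6) * A.mulVec v j : ℤ) ((0) + (-2) * A.mulVec v i + (-3) * A.mulVec v j : ℤ) ((0) + (-3) * A.mulVec v i + (-3) * A.mulVec v j : ℤ) (by ring)
  have t9 : s A h2 j (s A h2 i (s A h2 j (s A h2 i (s A h2 j (s A h2 i (s A h2 j (s A h2 i (s A h2 j (v))))))))) = v + ((0) + (-3) * A.mulVec v i + (-3) * A.mulVec v j : ℤ) • (Pi.single i 1 : Fin n → ℤ) + ((0) + (-1) * A.mulVec v i + (-1) * A.mulVec v j : ℤ) • (Pi.single j 1 : Fin n → ℤ) := by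
    rw [t8]
    exact stepJ A h2 i j 1 hb v ((0) + (-3) * A.mulVec v i + (-3) * A.mulVec v j : ℤ) ((0) + (-2) * A.mulVec v i + (-3) * A.mulVec v j : ℤ) ((0) + (-1) * A.mulVec v i + (-1) * A.mulVec v j : ℤ) (by ring)
  have t10 : s A h2 i (s A h2 j (s A h2 i (s A h2 j (s A h2 i (s A h2 j (s A h2 i (s A h2 j (s A h2 i (s A h2 j (v)))))))))) = v + ((0) + (-1) * A.mulVec v i + (0) * A.mulVec v j : ℤ) • (Pi.single i 1 : Fin n → ℤ) + ((0) + (-1) * A.mulVec v i + (-1) * A.mulVec v j : ℤ) • (Pi.single j 1 : Fin n → ℤ) := by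
    rw [t9]
    exact stepI A h2 i j 3 ha v ((0) + (-3) * A.mulVec v i + (-3) * A.mulVec v j : ℤ) ((0) + (-1) * A.mulVec v i + (-1) * A.mulVec v j : ℤ) ((0) + (-1) * A.mulVec v i + (0) * A.mulVec v j : ℤ) (by ring)
  have t11 : s A h2 j (s A h2 i (s A h2 j (s A h2 i (s A h2 j (s A h2 i (s A h2 j (s A h2 i (s A h2 j (s A h2 i (s A h2 j (v))))))))))) = v + ((0) + (-1) * A.mulVec v i + (0) * A.mulVec v j : ℤ) • (Pi.single i 1 : Fin n → ℤ) + ((0) + (0) * A.mulVec v i + (0) * A.mulVec v j : ℤ) • (Pi.single j 1 : Fin n → ℤ) := by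
    rw [t10]
    exact stepJ A h2 i j 1 hb v ((0) + (-1) * A.mulVec v i + (0) * A.mulVec v j : ℤ) ((0) + (-1) * A.mulVec v i + (-1) * A.mulVec v j : ℤ) ((0) + (0) * A.mulVec v i + (0) * A.mulVec v j : ℤ) (by ring)
  have t12 : s A h2 i (s A h2 j (s A h2 i (s A h2 j (s A h2 i (s A h2 j (s A h2 i (s A h2 j (s A h2 i (s A h2 j (s A h2 i (s A h2 j (v)))))))))))) = v + ((0) + (0) * A.mulVec v i + (0) * A.mulVec v j : ℤ) • (Pi.single i 1 : Fin n → ℤ) + ((0) + (0) * A.mulVec v i + (0) * A.mulVec v j : ℤ) • (Pi.single j 1 : Fin n → ℤ) := by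
    rw [t11]
    exact stepI A h2 i j 3 ha v ((0) + (-1) * A.mulVec v i + (0) * A.mulVec v j : ℤ) ((0) + (0) * A.mulVec v i + (0) * A.mulVec v j : ℤ) ((0) + (0) * A.mulVec v i + (0) * A.mulVec v j : ℤ) (by ring)
  rw [t12]
  show _ = v
  module

lemma dseq_even (i j : Fin n) (k : ℕ) :
    dseq A h2 i j (2*k) = (s A h2 i * s A h2 j)^k := by
  induction k with
  | zero => rfl
  | succ k ih =>
      have e1 : 2*(k+1) = (2*k+1)+1 := by ring
      rw [e1]
      have e2 : dseq A h2 i j ((2*k+1)+1)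
          = (if (2*k+1) % 2 = 0 then s A h2 j else s A h2 i) * dseq A h2 i j (2*k+1) := rfl
      have e3 : dseq A h2 i j (2*k+1)
          = (if (2*k) % 2 = 0 then s A h2 j else s A h2 i) * dseq A h2 i j (2*k) := rfl
      rw [e2, if_neg (by omega), e3, if_pos (by omega), ih]
      rw [pow_succ']
      group

lemma dseq_odd (i j : Fin n) (k : ℕ) :
    dseq A h2 i j (2*k+1) = s A h2 j * (s A h2 i * s A h2 j)^k := by
  have e3 : dseq A h2 i j (2*k+1)
      = (if (2*k) % 2 = 0 then s A h2 j else s A h2 i) * dseq A h2 i j (2*k) := rfl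
  rw [e3, if_pos (by omega), dseq_even]

lemma pow_word (i j : Fin n) (k : ℕ) :
    ∃ l, l.length = 2*k ∧ isWord A h2 ((s A h2 i * s A h2 j)^k) l := by
  induction k with
  | zero => exact ⟨[], rfl, isWord_nil A h2⟩
  | succ k ih =>
      obtain ⟨l, hl, hw⟩ := ih
      refine ⟨l ++ [i, j], by simp [hl]; omega, ?_⟩
      rw [pow_succ]
      exact isWord_mul A h2 hw
        (by
          have : ([i, j] : List (Fin n)) = [i] ++ [j] := rfl
          rw [this]
          exact isWord_mul A h2 (isWord_single A h2 i) (isWord_single A h2 j))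

lemma yx_pow_inv (i j : Fin n) (t : ℕ) :
    ((s A h2 i * s A h2 j)^t)⁻¹ = (s A h2 j * s A h2 i)^t := by
  rw [← inv_pow, _root_.mul_inv_rev, s_inv, s_inv]

lemma y_xy_pow (i j : Fin n) (k : ℕ) :
    s A h2 j * (s A h2 i * s A h2 j)^k = (s A h2 j * s A h2 i)^k * s A h2 j := by
  induction k with
  | zero => simp
  | succ k ih =>
      calc s A h2 j * (s A h2 i * s A h2 j)^(k+1)
          = (s A h2 j * s A h2 i) * (s A h2 j * (s A h2 i * s A h2 j)^k) := by
            rw [pow_succ']; simp only [mul_assoc]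
        _ = (s A h2 j * s A h2 i) * ((s A h2 j * s A h2 i)^k * s A h2 j) := by rw [ih]
        _ = (s A h2 j * s A h2 i)^(k+1) * s A h2 j := by
            rw [pow_succ']; simp only [mul_assoc]

lemma dseq_si_short (i j : Fin n) (m : ℕ) (hm : 1 ≤ m)
    (hrel : (s A h2 i * s A h2 j)^m = 1) (r : ℕ) (hr : m ≤ r) :
    ∃ l, l.length + 2 ≤ r + 1 ∧ isWord A h2 (dseq A h2 i j r * s A h2 i) l := by
  have hyx : (s A h2 j * s A h2 i)^m = 1 := by
    rw [← yx_pow_inv, hrel, inv_one]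
  rcases Nat.even_or_odd r with ⟨k, hk⟩ | ⟨k, hk⟩
  · -- r = 2k
    have hk' : r = 2*k := by omega
    subst hk'
    rw [dseq_even]
    by_cases hkm : m ≤ k
    · have e : (s A h2 i * s A h2 j)^k = (s A h2 i * s A h2 j)^(k-m) := by
        have : k = (k-m) + m := by omega
        rw [this, pow_add, hrel, mul_one]
        congr 1
        omega
      obtain ⟨l, hl, hw⟩ := pow_word A h2 i j (k-m)
      refine ⟨l ++ [i], by simp [hl]; omega, ?_⟩
      rw [e]
      exact isWord_mul A h2 hw (isWord_single A h2 i)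
    · -- m ≤ 2k, k < m
      push_neg at hkm
      have e : (s A h2 i * s A h2 j)^k = (s A h2 j * s A h2 i)^(m-k) := by
        have h1 : (s A h2 i * s A h2 j)^k * (s A h2 i * s A h2 j)^(m-k) = 1 := by
          rw [← pow_add]
          have : k + (m-k) = m := by omega
          rw [this, hrel]
        have := eq_inv_of_mul_eq_one_left h1
        rw [← yx_pow_inv] at this
        rw [eq_inv_of_mul_eq_one_left h1, yx_pow_inv]
      obtain ⟨c, hc⟩ : ∃ c, m - k = c + 1 := ⟨m-k-1, by omega⟩
      have hc2 : m - k - 1 = c := by omega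
      have e2 : (s A h2 j * s A h2 i)^(m-k) * s A h2 i
          = (s A h2 j * s A h2 i)^(m-k-1) * s A h2 j := by
        rw [hc]
        simp only [Nat.add_sub_cancel]
        rw [pow_succ, mul_assoc, mul_assoc, s_mul_self, mul_one]
      obtain ⟨l, hl, hw⟩ := pow_word A h2 j i (m-k-1)
      refine ⟨l ++ [j], by simp [hl]; omega, ?_⟩
      rw [e, e2]
      exact isWord_mul A h2 hw (isWord_single A h2 j)
  · -- r = 2k+1
    have hk' : r = 2*k+1 := by omega
    subst hk'
    rw [dseq_odd]
    have e0 : s A h2 j * (s A h2 i * s A h2 j)^k * s A h2 i = (s A h2 j * s A h2 i)^(k+1) := by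
      rw [y_xy_pow, pow_succ, mul_assoc]
    rw [e0]
    by_cases hkm : m ≤ k+1
    · have e : (s A h2 j * s A h2 i)^(k+1) = (s A h2 j * s A h2 i)^(k+1-m) := by
        have : k+1 = (k+1-m) + m := by omega
        rw [this, pow_add, hyx, mul_one]
        congr 1
        omega
      obtain ⟨l, hl, hw⟩ := pow_word A h2 j i (k+1-m)
      refine ⟨l, by omega, ?_⟩
      rw [e]
      exact hw
    · push_neg at hkm
      have e : (s A h2 j * s A h2 i)^(k+1) = (s A h2 i * s A h2 j)^(m-(k+1)) := by
        have h1 : (s A h2 j * s A h2 i)^(k+1) * (s A h2 j * s A h2 i)^(m-(k+1)) = 1 := by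
          rw [← pow_add]
          have : (k+1) + (m-(k+1)) = m := by omega
          rw [this, hyx]
        rw [eq_inv_of_mul_eq_one_left h1, ← yx_pow_inv, inv_inv]
      obtain ⟨l, hl, hw⟩ := pow_word A h2 i j (m-(k+1))
      refine ⟨l, by omega, ?_⟩
      rw [e]
      exact hw

lemma pq_nonneg_of_ge4 (a b : ℤ) (ha : 1 ≤ a) (hb : 1 ≤ b) (hab : 4 ≤ a*b) (t : ℕ) :
    0 ≤ (pqSeq a b t).1 ∧ 0 ≤ (pqSeq a b t).2 ∧
    (t % 2 = 0 → a * (pqSeq a b t).2 ≤ 2 * (pqSeq a b t).1) ∧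
    (t % 2 = 1 → b * (pqSeq a b t).1 ≤ 2 * (pqSeq a b t).2) := by
  induction t with
  | zero =>
      refine ⟨by norm_num [pqSeq], by norm_num [pqSeq], fun _ => by norm_num [pqSeq],
        fun h => by omega⟩
  | succ t ih =>
      obtain ⟨hp, hq, hI, hJ⟩ := ih
      have hpq : pqSeq a b (t+1) = if t % 2 = 0 then
            ((pqSeq a b t).1, b * (pqSeq a b t).1 - (pqSeq a b t).2)
          else (a * (pqSeq a b t).2 - (pqSeq a b t).1, (pqSeq a b t).2) := rfl
      rcases Nat.even_or_odd t with he | ho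
      · have ht : t % 2 = 0 := Nat.even_iff.mp he
        have ht1 : (t+1) % 2 = 1 := by omega
        have key := hI ht
        rw [hpq, if_pos ht]
        dsimp only
        refine ⟨hp, by nlinarith, fun h => by omega, fun _ => by nlinarith⟩
      · have ht : t % 2 = 1 := Nat.odd_iff.mp ho
        have ht1 : (t+1) % 2 = 0 := by omega
        have key := hJ ht
        rw [hpq, if_neg (by omega)]
        dsimp only
        refine ⟨by nlinarith, hq, fun _ => by nlinarith, fun h => by omega⟩

lemma pq_good (i j : Fin n) (hAij : A i j ≤ 0) (hAji : A j i ≤ 0)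
    (hzero : A i j = 0 ↔ A j i = 0) (r : ℕ) (hr : 1 ≤ r) :
    (0 ≤ (pqSeq (-A i j) (-A j i) r).1 ∧ 0 ≤ (pqSeq (-A i j) (-A j i) r).2)
    ∨ ∃ l, l.length + 2 ≤ r + 1 ∧ isWord A h2 (dseq A h2 i j r * s A h2 i) l := by
  set a : ℤ := -A i j with hadef
  set b : ℤ := -A j i with hbdef
  have ha0 : 0 ≤ a := by omega
  have hb0 : 0 ≤ b := by omega
  have haij : A i j = -a := by omega
  have hbji : A j i = -b := by omega
  by_cases hz : a = 0
  · -- both zero, m = 2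
    have hbz : b = 0 := by
      have := hzero.mp (by omega)
      omega
    by_cases hr2 : r ≤ 1
    · left
      have : r = 1 := by omega
      subst this
      have h1 : pqSeq a b 1 = (1, b) := by simp [pqSeq]
      rw [h1]
      constructor
      · norm_num
      · omega
    · right
      exact dseq_si_short A h2 i j 2 (by norm_num)
        (rel_0_0 A h2 i j (by omega) (by omega)) r (by omega)
  · have ha1 : 1 ≤ a := by omega
    have hb1 : 1 ≤ b := by
      rcases eq_or_lt_of_le hb0 with h | h
      · exfalso; exact hz (by have := hzero.mpr (by omega); omega)
      · omega
    by_cases hab4 : 4 ≤ a * b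
    · left
      have := pq_nonneg_of_ge4 a b ha1 hb1 hab4 r
      exact ⟨this.1, this.2.1⟩
    · push_neg at hab4
      have hab3 : a * b ≤ 3 := by omega
      have ha3 : a ≤ 3 := by nlinarith
      clear_value a b
      rcases (by omega : a = 1 ∨ a = 2 ∨ a = 3) with rfl | rfl | rfl
      · rcases (by omega : b = 1 ∨ b = 2 ∨ b = 3) with rfl | rfl | rfl
        · by_cases hrm : 3 ≤ r
          · exact Or.inr (dseq_si_short A h2 i j 3 (by norm_num)
              (rel_1_1 A h2 i j (by omega) (by omega)) r hrm)
          · push_neg at hrm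
            left
            interval_cases r <;> exact ⟨by decide, by decide⟩
        · by_cases hrm : 4 ≤ r
          · exact Or.inr (dseq_si_short A h2 i j 4 (by norm_num)
              (rel_1_2 A h2 i j (by omega) (by omega)) r hrm)
          · push_neg at hrm
            left
            interval_cases r <;> exact ⟨by decide, by decide⟩
        · by_cases hrm : 6 ≤ r
          · exact Or.inr (dseq_si_short A h2 i j 6 (by norm_num)
              (rel_1_3 A h2 i j (by omega) (by omega)) r hrm)
          · push_neg at hrm
            left
            interval_cases r <;> exact ⟨by decide, by decide⟩
      · have hb1' : b = 1 := by nlinarith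
        subst hb1'
        · by_cases hrm : 4 ≤ r
          · exact Or.inr (dseq_si_short A h2 i j 4 (by norm_num)
              (rel_2_1 A h2 i j (by omega) (by omega)) r hrm)
          · push_neg at hrm
            left
            interval_cases r <;> exact ⟨by decide, by decide⟩
      · have hb1' : b = 1 := by nlinarith
        subst hb1'
        · by_cases hrm : 6 ≤ r
          · exact Or.inr (dseq_si_short A h2 i j 6 (by norm_num)
              (rel_3_1 A h2 i j (by omega) (by omega)) r hrm)
          · push_neg at hrm
            left
            interval_cases r <;> exact ⟨by decide, by decide⟩


lemma single_nonneg_base (i : Fin n) (k : Fin n) :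
    (0:ℤ) ≤ (Pi.single i 1 : Fin n → ℤ) k := by
  rcases eq_or_ne k i with rfl | hne
  · simp
  · simp [Pi.single_eq_of_ne hne]

theorem refl_single_nonneg (hoff : ∀ i j, i ≠ j → A i j ≤ 0)
    (hsym : ∀ i j, A i j = 0 ↔ A j i = 0) :
    ∀ N (h : (Fin n → ℤ) ≃ₗ[ℤ] (Fin n → ℤ)), h ∈ weyl A h2 → wlen A h2 h ≤ N →
      ∀ i : Fin n, wlen A h2 h ≤ wlen A h2 (h * s A h2 i) →
        ∀ k, 0 ≤ h (Pi.single i 1) k := by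
  intro N
  induction N with
  | zero =>
      intro h hW hlen i _ k
      rw [eq_one_of_wlen_zero A h2 hW (by omega)]
      exact single_nonneg_base i k
  | succ N ih =>
      intro h hW hlen i hi k
      by_cases h0 : wlen A h2 h = 0
      · rw [eq_one_of_wlen_zero A h2 hW h0]
        exact single_nonneg_base i k
      obtain ⟨j, hj⟩ := exists_descent A h2 hW h0
      have hij : i ≠ j := by
        intro e
        rw [e] at hi
        omega
      classical
      set L := wlen A h2 h with hL
      set Tp : ℕ → Prop := fun t => 1 ≤ t ∧ wlen A h2 (h * (dseq A h2 i j t)⁻¹) + t ≤ L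
        with hTp
      have hT1 : Tp 1 := by
        refine ⟨by norm_num, ?_⟩
        have e1 : dseq A h2 i j 1 = s A h2 j * dseq A h2 i j 0 := rfl
        have e : (dseq A h2 i j 1)⁻¹ = s A h2 j := by
          rw [e1]
          show (s A h2 j * 1)⁻¹ = s A h2 j
          rw [mul_one, s_inv]
        rw [e]
        omega
      have hL1 : 1 ≤ L := by omega
      set r := Nat.findGreatest Tp L with hrdef
      have hrT : Tp r := Nat.findGreatest_spec (m := 1) hL1 hT1
      obtain ⟨hr1, hrlen⟩ := hrT
      set v := h * (dseq A h2 i j r)⁻¹ with hv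
      have hvW : v ∈ weyl A h2 :=
        mul_mem hW (inv_mem (isWord_mem_weyl A h2 (dseq_word A h2 i j r).choose_spec.2))
      have hveq : h = v * dseq A h2 i j r := by rw [hv]; group
      have hdr : ∀ t, wlen A h2 (dseq A h2 i j t) ≤ t := by
        intro t
        obtain ⟨l, hl, hw⟩ := dseq_word A h2 i j t
        have := wlen_le A h2 hw
        omega
      have hdW : ∀ t, dseq A h2 i j t ∈ weyl A h2 := dseq_mem_weyl A h2 i j
      have hvlow : L ≤ wlen A h2 v + r := by
        calc L = wlen A h2 (v * dseq A h2 i j r) := by rw [← hveq]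
        _ ≤ wlen A h2 v + wlen A h2 (dseq A h2 i j r) := wlen_mul_le A h2 hvW (hdW r)
        _ ≤ wlen A h2 v + r := by have := hdr r; omega
      have hvN : wlen A h2 v ≤ N := by omega
      -- stop condition for the next letter
      have hnext : wlen A h2 v ≤
          wlen A h2 (v * (if r % 2 = 0 then s A h2 j else s A h2 i)) := by
        by_cases hrL : r < L
        · have hmax : ¬ Tp (r+1) := by
            intro hTpr
            have := Nat.le_findGreatest (by omega : r+1 ≤ L) hTpr
            omega
          have he : h * (dseq A h2 i j (r+1))⁻¹
              = v * (if r % 2 = 0 then s A h2 j else s A h2 i) := by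
            rw [dseq_succ_inv, hv, mul_assoc]
          have hnT : ¬ (1 ≤ r + 1 ∧ wlen A h2 (h * (dseq A h2 i j (r+1))⁻¹) + (r+1) ≤ L) :=
            hmax
          rw [he] at hnT
          push_neg at hnT
          have := hnT (by omega)
          omega
        · have hv0 : wlen A h2 v = 0 := by omega
          omega
      -- the previous letter increases length as well
      obtain ⟨r', hr'⟩ : ∃ r', r = r' + 1 := ⟨r - 1, by omega⟩
      have hprev : wlen A h2 v + 1 ≤
          wlen A h2 (v * (if r' % 2 = 0 then s A h2 j else s A h2 i)) := by
        have hsplit : dseq A h2 i j r = (if r' % 2 = 0 then s A h2 j else s A h2 i)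
            * dseq A h2 i j r' := by rw [hr']; rfl
        have hletter : (if r' % 2 = 0 then s A h2 j else s A h2 i)
            * (if r' % 2 = 0 then s A h2 j else s A h2 i) = 1 := by
          split <;> exact s_mul_self A h2 _
        have he : v * (if r' % 2 = 0 then s A h2 j else s A h2 i)
            = h * (dseq A h2 i j r')⁻¹ := by
          rw [hv, hr', dseq_succ_inv, ← mul_assoc, mul_assoc (h * (dseq A h2 i j r')⁻¹),
            hletter, mul_one]
        have hlow' : L ≤ wlen A h2 (h * (dseq A h2 i j r')⁻¹) + r' := by
          have hW' : h * (dseq A h2 i j r')⁻¹ ∈ weyl A h2 := mul_mem hW (inv_mem (hdW r'))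
          have he2 : h = (h * (dseq A h2 i j r')⁻¹) * dseq A h2 i j r' := by group
          calc L = wlen A h2 ((h * (dseq A h2 i j r')⁻¹) * dseq A h2 i j r') := by rw [← he2]
          _ ≤ wlen A h2 (h * (dseq A h2 i j r')⁻¹) + wlen A h2 (dseq A h2 i j r') :=
              wlen_mul_le A h2 hW' (hdW r')
          _ ≤ _ := by have := hdr r'; omega
        rw [he]
        omega
      have hsxi : wlen A h2 v ≤ wlen A h2 (v * s A h2 i) ∧
          wlen A h2 v ≤ wlen A h2 (v * s A h2 j) := by
        rcases Nat.even_or_odd r with he | ho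
        · have h1 : r % 2 = 0 := Nat.even_iff.mp he
          have h2' : ¬ (r' % 2 = 0) := by omega
          rw [if_pos h1] at hnext
          rw [if_neg h2'] at hprev
          exact ⟨by omega, hnext⟩
        · have h1 : ¬ (r % 2 = 0) := by rw [Nat.odd_iff] at ho; omega
          have h2' : r' % 2 = 0 := by rw [Nat.odd_iff] at ho; omega
          rw [if_neg h1] at hnext
          rw [if_pos h2'] at hprev
          exact ⟨hnext, by omega⟩
      have hvi := ih v hvW hvN i hsxi.1
      have hvj := ih v hvW hvN j hsxi.2
      rcases pq_good A h2 i j (hoff i j hij) (hoff j i hij.symm) (hsym i j) r hr1 with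
        ⟨hp, hq⟩ | ⟨l, hll, hwshort⟩
      · have happ : h (Pi.single i 1) = v (dseq A h2 i j r (Pi.single i 1)) := by
          rw [hveq]; rfl
        rw [happ, dseq_apply_single A h2 i j (-A i j) (-A j i) (by ring) (by ring) r,
          map_add, _root_.map_smul, _root_.map_smul]
        simp only [Pi.add_apply, Pi.smul_apply, smul_eq_mul]
        exact add_nonneg (mul_nonneg hp (hvi k)) (mul_nonneg hq (hvj k))
      · exfalso
        have h1 : h * s A h2 i = v * (dseq A h2 i j r * s A h2 i) := by
          rw [hveq]; group
        have h2' : wlen A h2 (h * s A h2 i) ≤ wlen A h2 v + l.length := by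
          rw [h1]
          calc wlen A h2 (v * (dseq A h2 i j r * s A h2 i))
              ≤ wlen A h2 v + wlen A h2 (dseq A h2 i j r * s A h2 i) :=
                wlen_mul_le A h2 hvW (mul_mem (hdW r) (s_mem_weyl A h2 i))
          _ ≤ wlen A h2 v + l.length := by have := wlen_le A h2 hwshort; omega
        omega

theorem weyl_ge (hoff : ∀ i j, i ≠ j → A i j ≤ 0)
    (hsym : ∀ i j, A i j = 0 ↔ A j i = 0) :
    ∀ N (g : (Fin n → ℤ) ≃ₗ[ℤ] (Fin n → ℤ)), g ∈ weyl A h2 → wlen A h2 g ≤ N →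
      ∀ v : Fin n → ℤ, (∀ i, A.mulVec v i ≤ 0) → ∀ k, v k ≤ g v k := by
  intro N
  induction N with
  | zero =>
      intro g hW hlen v _ k
      rw [eq_one_of_wlen_zero A h2 hW (by omega)]
      exact le_refl _
  | succ N ih =>
      intro g hW hlen v hv k
      by_cases h0 : wlen A h2 g = 0
      · rw [eq_one_of_wlen_zero A h2 hW h0]
        exact le_refl _
      obtain ⟨j, hj⟩ := exists_descent A h2 hW h0
      set g' := g * s A h2 j with hg'
      have hg'W : g' ∈ weyl A h2 := mul_mem hW (s_mem_weyl A h2 j)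
      have hgeq : g = g' * s A h2 j := by
        rw [hg', mul_assoc, s_mul_self, mul_one]
      have hg'N : wlen A h2 g' ≤ N := by omega
      have hFS : ∀ k, 0 ≤ g' (Pi.single j 1) k := by
        apply refl_single_nonneg A h2 hoff hsym N g' hg'W hg'N j
        rw [← hgeq]
        omega
      have happ : g v = g' (s A h2 j v) := by rw [hgeq]; rfl
      rw [happ, s_apply, map_sub, _root_.map_smul]
      have hIH := ih g' hg'W hg'N v hv k
      have hc : A.mulVec v j ≤ 0 := hv j
      have hs : 0 ≤ g' (Pi.single j 1) k := hFS k
      simp only [Pi.sub_apply, Pi.smul_apply, smul_eq_mul]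
      nlinarith

lemma prod_apply_notmem (l : List (Fin n)) (v : Fin n → ℤ) (j : Fin n) (hj : j ∉ l) :
    ((l.map (s A h2)).prod) v j = v j := by
  induction l with
  | nil => rfl
  | cons a t ih =>
      have hja : j ≠ a := fun e => hj (by rw [e]; exact List.mem_cons_self)
      have hjt : j ∉ t := fun e => hj (List.mem_cons_of_mem a e)
      rw [List.map_cons, List.prod_cons]
      have : ((s A h2 a * (t.map (s A h2)).prod)) v
          = s A h2 a (((t.map (s A h2)).prod) v) := rfl
      rw [this, s_apply_ne A h2 a _ hja, ih hjt]

lemma mem_take_finRange {t : ℕ} {u : Fin n} (hu : u ∈ (List.finRange n).take t) :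
    (u : ℕ) < t := by
  rw [List.mem_iff_getElem] at hu
  obtain ⟨m, hm, he⟩ := hu
  have hm' : m < t := by
    simp [List.length_take, List.length_finRange] at hm
    omega
  have : (List.finRange n).take t = (List.finRange n).take t := rfl
  rw [List.getElem_take] at he
  rw [List.getElem_finRange] at he
  have : (u : ℕ) = m := by rw [← he]; rfl
  omega

lemma mem_drop_finRange {t : ℕ} {u : Fin n} (hu : u ∈ (List.finRange n).drop t) :
    t ≤ (u : ℕ) := by
  rw [List.mem_iff_getElem] at hu
  obtain ⟨m, hm, he⟩ := hu
  rw [List.getElem_drop, List.getElem_finRange] at he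
  have : (u : ℕ) = t + m := by rw [← he]; rfl
  omega

lemma cox_eq_prod_map : cox A h2 = ((List.finRange n).map (s A h2)).prod := by
  unfold cox
  rw [List.ofFn_eq_map]

lemma cox_mem_weyl : cox A h2 ∈ weyl A h2 := by
  apply isWord_mem_weyl A h2 (l := List.finRange n)
  exact cox_eq_prod_map A h2

lemma cox_coord (v : Fin n → ℤ) (k : Fin n) :
    cox A h2 v k = v k
      - A.mulVec (fun u => if (u:ℕ) ≤ (k:ℕ) then v u else cox A h2 v u) k := by
  classical
  set β := cox A h2 v with hβdef
  have hklen : (k : ℕ) < (List.finRange n).length := by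
    rw [List.length_finRange]; exact k.isLt
  set l₁ := (List.finRange n).take (k:ℕ) with hl₁
  set l₂ := (List.finRange n).drop ((k:ℕ)+1) with hl₂
  have hget : (List.finRange n)[(k:ℕ)]'hklen = k := by
    rw [List.getElem_finRange]; rfl
  have hdrop : (List.finRange n).drop (k:ℕ) = k :: l₂ := by
    rw [List.drop_eq_getElem_cons hklen, hget]
  have hsplit : List.finRange n = l₁ ++ k :: l₂ := by
    conv_lhs => rw [← List.take_append_drop (k:ℕ) (List.finRange n)]
    rw [hdrop]
  set y := ((l₂.map (s A h2)).prod) v with hy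
  have hβy : β = ((l₁.map (s A h2)).prod) (s A h2 k y) := by
    rw [hβdef, cox_eq_prod_map A h2, hsplit, List.map_append, List.prod_append,
      List.map_cons, List.prod_cons]
    rfl
  have hknotl₁ : k ∉ l₁ := fun hmem => by
    have := mem_take_finRange hmem; omega
  have hy_low : ∀ u : Fin n, (u:ℕ) ≤ (k:ℕ) → y u = v u := by
    intro u hu
    apply prod_apply_notmem
    intro hmem
    have := mem_drop_finRange hmem
    omega
  have hy_high : ∀ u : Fin n, (k:ℕ) < (u:ℕ) → y u = β u := by
    intro u hu
    have hune : u ≠ k := by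
      intro e; rw [e] at hu; omega
    rw [hβy, prod_apply_notmem A h2 l₁ _ u (fun hmem => by
      have := mem_take_finRange hmem; omega), s_apply_ne A h2 k _ hune]
  have hbk : β k = y k - A.mulVec y k := by
    rw [hβy, prod_apply_notmem A h2 l₁ _ k hknotl₁, s_apply]
    simp [Pi.single_eq_same]
  have hyeq : y = fun u : Fin n => if (u:ℕ) ≤ (k:ℕ) then v u else β u := by
    funext u
    by_cases hu : (u:ℕ) ≤ (k:ℕ)
    · rw [if_pos hu]; exact hy_low u hu
    · rw [if_neg hu]; exact hy_high u (by omega)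
  have hbeta : (fun u : Fin n => if (u:ℕ) ≤ (k:ℕ) then v u else β u) k = v k := by simp
  rw [hbk, hyeq, hbeta]

lemma cox_fixed_mulVec_zero (v : Fin n → ℤ) (hfix : cox A h2 v = v) :
    ∀ k, A.mulVec v k = 0 := by
  intro k
  have := cox_coord A h2 v k
  rw [hfix] at this
  simp only [ite_self] at this
  have he : A.mulVec (fun u => v u) k = A.mulVec v k := rfl
  rw [he] at this
  omega

end Aux

/-- The word length of `ω` with respect to the generators `s 1, …, s n`. -/
noncomputable def len (A : Matrix (Fin n) (Fin n) ℤ) (h2 : ∀ i, A i i = 2)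
    (ω : (Fin n → ℤ) ≃ₗ[ℤ] (Fin n → ℤ)) : ℕ :=
  sInf {k | ∃ f : Fin k → Fin n, ω = (List.ofFn (fun j => s A h2 (f j))).prod}

/-- `v ∈ ℤ^n` is positive: nonzero with all coordinates `≥ 0`. -/
def IsPos (v : Fin n → ℤ) : Prop := v ≠ 0 ∧ ∀ i, 0 ≤ v i

/-- The height of a vector: the sum of its coordinates. -/
def ht (v : Fin n → ℤ) : ℤ := ∑ i, v i

/-- The graph `Γ` on `{1, …, n}` with an edge between `i ≠ j` iff `A i j ≠ 0`. -/
def gcmGraph (A : Matrix (Fin n) (Fin n) ℤ) (hsym : ∀ i j, A i j = 0 ↔ A j i = 0) :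
    SimpleGraph (Fin n) where
  Adj i j := i ≠ j ∧ A i j ≠ 0
  symm := by
    constructor
    rintro i j ⟨hij, h⟩
    exact ⟨hij.symm, fun h0 => h ((hsym i j).mpr h0)⟩
  loopless := by constructor; rintro i ⟨h, -⟩; exact h rfl

/-- `A` is indecomposable: the graph `Γ` is connected. -/
def Indecomposable (A : Matrix (Fin n) (Fin n) ℤ) (hsym : ∀ i j, A i j = 0 ↔ A j i = 0) :
    Prop :=
  (gcmGraph A hsym).Connected

/-- `A` is of indefinite type: there is `u > 0` (componentwise) with `A·u < 0` componentwise. -/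
def IndefiniteType (A : Matrix (Fin n) (Fin n) ℤ) : Prop :=
  ∃ u : Fin n → ℤ, (∀ i, 0 < u i) ∧ ∀ i, (A.mulVec u) i < 0

/-- The fundamental set `K`: positive vectors with connected support and `A·v ≤ 0`. -/
def fundK (A : Matrix (Fin n) (Fin n) ℤ) (hsym : ∀ i j, A i j = 0 ↔ A j i = 0) :
    Set (Fin n → ℤ) :=
  {v | IsPos v ∧ ((gcmGraph A hsym).induce {i | v i ≠ 0}).Connected ∧
    ∀ i, (A.mulVec v) i ≤ 0}

/-- The real roots: the `W`-orbits of the standard basis vectors. -/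
def realRoots (A : Matrix (Fin n) (Fin n) ℤ) (h2 : ∀ i, A i i = 2) : Set (Fin n → ℤ) :=
  {v | ∃ g ∈ weyl A h2, ∃ i : Fin n, v = g (Pi.single i 1)}

/-- The positive imaginary roots: the `W`-orbit of the fundamental set `K`. -/
def posImRoots (A : Matrix (Fin n) (Fin n) ℤ) (h2 : ∀ i, A i i = 2)
    (hsym : ∀ i j, A i j = 0 ↔ A j i = 0) : Set (Fin n → ℤ) :=
  {v | ∃ g ∈ weyl A h2, ∃ k ∈ fundK A hsym, v = g k}

/-- The set of roots `Δ`. -/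
def roots (A : Matrix (Fin n) (Fin n) ℤ) (h2 : ∀ i, A i i = 2)
    (hsym : ∀ i j, A i j = 0 ↔ A j i = 0) : Set (Fin n → ℤ) :=
  realRoots A h2 ∪ posImRoots A h2 hsym ∪ (-(posImRoots A h2 hsym))

/-- The set of positive roots `Δ₊`. -/
def posRoots (A : Matrix (Fin n) (Fin n) ℤ) (h2 : ∀ i, A i i = 2)
    (hsym : ∀ i j, A i j = 0 ↔ A j i = 0) : Set (Fin n → ℤ) :=
  {v ∈ roots A h2 hsym | IsPos v}

/-- The set of negative roots `Δ₋ = -Δ₊`. -/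
def negRoots (A : Matrix (Fin n) (Fin n) ℤ) (h2 : ∀ i, A i i = 2)
    (hsym : ∀ i j, A i j = 0 ↔ A j i = 0) : Set (Fin n → ℤ) :=
  -(posRoots A h2 hsym)


section Aux2

variable (A : Matrix (Fin n) (Fin n) ℤ) (h2 : ∀ i, A i i = 2)

lemma no_nonneg_kernel (hoff : ∀ i j, i ≠ j → A i j ≤ 0)
    (hsym : ∀ i j, A i j = 0 ↔ A j i = 0)
    (hInd : (gcmGraph A hsym).Connected) (hIndef : IndefiniteType A)
    (β : Fin n → ℤ) (hpos : ∀ i, 0 ≤ β i) (hnz : β ≠ 0)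
    (hker : ∀ k, A.mulVec β k = 0) : False := by
  classical
  -- support is closed under adjacency
  have hclosed : ∀ x y : Fin n, (gcmGraph A hsym).Adj x y → β x ≠ 0 → β y ≠ 0 := by
    intro x y hadj hx hy0
    have hxy : x ≠ y := hadj.1
    have hsum : ∑ u, A y u * β u = 0 := by
      have := hker y
      rwa [Matrix.mulVec, dotProduct] at this
    have hterms : ∀ u ∈ Finset.univ, A y u * β u ≤ 0 := by
      intro u _
      rcases eq_or_ne u y with rfl | hne
      · rw [hy0]; simp
      · exact mul_nonpos_of_nonpos_of_nonneg (hoff y u (Ne.symm hne)) (hpos u)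
    have hzero : ∀ u ∈ Finset.univ, A y u * β u = 0 :=
      (Finset.sum_eq_zero_iff_of_nonpos hterms).mp hsum
    have hAyx : A y x = 0 := by
      have := hzero x (Finset.mem_univ x)
      rcases mul_eq_zero.mp this with h | h
      · exact h
      · exact absurd h hx
    exact hadj.2 ((hsym x y).mpr hAyx)
  -- full support
  obtain ⟨i0, hi0⟩ : ∃ i, β i ≠ 0 := by
    by_contra hcon
    push_neg at hcon
    exact hnz (funext hcon)
  have hstep : ∀ (x y : Fin n) (p : (gcmGraph A hsym).Walk x y), β x ≠ 0 → β y ≠ 0 := by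
    intro x y p
    induction p with
    | nil => exact id
    | cons hadj ptail ih => intro hx; exact ih (hclosed _ _ hadj hx)
  have hall : ∀ y, β y ≠ 0 :=
    fun y => (hInd.preconnected i0 y).elim fun p => hstep i0 y p hi0
  have hbpos : ∀ y, 0 < β y := fun y => lt_of_le_of_ne (hpos y) (Ne.symm (hall y))
  -- indefinite vector
  obtain ⟨u, hu1, hu2⟩ := hIndef
  -- pick k maximizing u i / β i
  have hne : (Finset.univ : Finset (Fin n)).Nonempty := ⟨i0, Finset.mem_univ i0⟩
  obtain ⟨k, -, hk⟩ := Finset.exists_max_image Finset.univ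
    (fun i => (u i : ℚ) / (β i : ℚ)) hne
  -- v := u k • β - β k • u  is ≥ 0 with v k = 0
  set v : Fin n → ℤ := fun i => u k * β i - β k * u i with hv
  have hvk : v k = 0 := by simp [hv, mul_comm]
  have hvnn : ∀ i, 0 ≤ v i := by
    intro i
    have h1 : (u i : ℚ) / (β i : ℚ) ≤ (u k : ℚ) / (β k : ℚ) := hk i (Finset.mem_univ i)
    have hbi : (0:ℚ) < (β i : ℚ) := by exact_mod_cast hbpos i
    have hbk : (0:ℚ) < (β k : ℚ) := by exact_mod_cast hbpos k
    rw [div_le_div_iff₀ hbi hbk] at h1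
    have h2 : (u i : ℚ) * (β k : ℚ) ≤ (u k : ℚ) * (β i : ℚ) := h1
    have h3 : u i * β k ≤ u k * β i := by exact_mod_cast h2
    simp only [hv]
    nlinarith
  -- (A v) k > 0
  have hAvk : A.mulVec v k = - (β k * A.mulVec u k) := by
    have : v = u k • β - β k • u := by
      funext i
      simp [hv, mul_comm]
    rw [this, Matrix.mulVec_sub, Matrix.mulVec_smul, Matrix.mulVec_smul]
    simp only [Pi.sub_apply, Pi.smul_apply, smul_eq_mul, hker k]
    ring
  have hAvk_pos : 0 < A.mulVec v k := by
    rw [hAvk]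
    have := hu2 k
    have := hbpos k
    nlinarith
  -- but (A v) k ≤ 0
  have hAvk_nonpos : A.mulVec v k ≤ 0 := by
    rw [Matrix.mulVec, dotProduct]
    apply Finset.sum_nonpos
    intro u' _
    rcases eq_or_ne u' k with rfl | hne'
    · rw [hvk]; simp
    · exact mul_nonpos_of_nonpos_of_nonneg (hoff k u' (Ne.symm hne')) (hvnn u')
  omega

lemma posImRoots_isPos (hoff : ∀ i j, i ≠ j → A i j ≤ 0)
    (hsym : ∀ i j, A i j = 0 ↔ A j i = 0) {α : Fin n → ℤ}
    (hα : α ∈ posImRoots A h2 hsym) : IsPos α := by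
  obtain ⟨g, hg, κ, hκ, rfl⟩ := hα
  have hge : ∀ c, κ c ≤ g κ c :=
    weyl_ge A h2 hoff hsym (wlen A h2 g) g hg (le_refl _) κ hκ.2.2
  obtain ⟨hκnz, hκnn⟩ := hκ.1
  refine ⟨?_, fun c => le_trans (hκnn c) (hge c)⟩
  obtain ⟨c, hc⟩ := Function.ne_iff.mp hκnz
  intro he
  have h1 : (0:ℤ) < κ c := lt_of_le_of_ne (hκnn c) (Ne.symm hc)
  have h3 := hge c
  rw [he] at h3
  simp only [Pi.zero_apply] at h3
  omega

lemma posImRoots_smul (hsym : ∀ i j, A i j = 0 ↔ A j i = 0)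
    {g : (Fin n → ℤ) ≃ₗ[ℤ] (Fin n → ℤ)} (hg : g ∈ weyl A h2) {α : Fin n → ℤ}
    (hα : α ∈ posImRoots A h2 hsym) : g α ∈ posImRoots A h2 hsym := by
  obtain ⟨g', hg', κ, hκ, rfl⟩ := hα
  exact ⟨g * g', mul_mem hg hg', κ, hκ, rfl⟩

lemma cox_zpow_posImRoots (hsym : ∀ i j, A i j = 0 ↔ A j i = 0) (l : ℤ) {α : Fin n → ℤ}
    (hα : α ∈ posImRoots A h2 hsym) : (cox A h2 ^ l) α ∈ posImRoots A h2 hsym :=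
  posImRoots_smul A h2 hsym (zpow_mem (cox_mem_weyl A h2) l) hα

lemma cox_orbit_inj (hoff : ∀ i j, i ≠ j → A i j ≤ 0)
    (hsym : ∀ i j, A i j = 0 ↔ A j i = 0)
    (hInd : (gcmGraph A hsym).Connected) (hIndef : IndefiniteType A)
    {α : Fin n → ℤ} (hα : α ∈ posImRoots A h2 hsym) :
    Function.Injective (fun l : ℤ => (cox A h2 ^ l) α) := by
  set w := cox A h2 with hw
  -- first: no positive natural period
  have key : ∀ m : ℕ, 0 < m → (w ^ (m:ℤ)) α = α → False := by
    intro m hm hfix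
    have hfixm : (w ^ m) α = α := by
      rw [← zpow_natCast w m]; exact hfix
    set F : ℕ → (Fin n → ℤ) := fun t => (w ^ t) α with hF
    have hFim : ∀ t, F t ∈ posImRoots A h2 hsym := by
      intro t
      exact posImRoots_smul A h2 hsym (pow_mem (cox_mem_weyl A h2) t) hα
    have hFpos : ∀ t c, 0 ≤ F t c := fun t c =>
      (posImRoots_isPos A h2 hoff hsym (hFim t)).2 c
    set β : Fin n → ℤ := ∑ t ∈ Finset.range m, F t with hβ
    have hcoxβ : w β = β := by
      have h4 : w β = ∑ t ∈ Finset.range m, F (t+1) := by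
        rw [hβ, map_sum]
        apply Finset.sum_congr rfl
        intro t _
        show w ((w ^ t) α) = (w ^ (t+1)) α
        rw [pow_succ']
        rfl
      have h1 := Finset.sum_range_succ' F m
      have h2' := Finset.sum_range_succ F m
      have h3 : F m = F 0 := by
        show (w ^ m) α = (w ^ 0) α
        rw [hfixm, pow_zero]
        rfl
      rw [h3] at h2'
      rw [h4]
      have := h1.symm.trans h2'
      exact add_right_cancel this
    have hβnn : ∀ c, 0 ≤ β c := by
      intro c
      rw [hβ, Finset.sum_apply]
      exact Finset.sum_nonneg fun t _ => hFpos t c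
    have hβnz : β ≠ 0 := by
      obtain ⟨hαnz, hαnn⟩ := posImRoots_isPos A h2 hoff hsym hα
      obtain ⟨c, hc⟩ := Function.ne_iff.mp hαnz
      have hαc : (0:ℤ) < α c := lt_of_le_of_ne (hαnn c) (Ne.symm hc)
      have hle : α c ≤ β c := by
        rw [hβ, Finset.sum_apply]
        have h0 : F 0 c = α c := by show ((w ^ 0) α) c = α c; rw [pow_zero]; rfl
        calc α c = F 0 c := h0.symm
        _ ≤ ∑ t ∈ Finset.range m, F t c :=
            Finset.single_le_sum (fun t _ => hFpos t c) (Finset.mem_range.mpr hm)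
      intro he
      rw [he] at hle
      simp only [Pi.zero_apply] at hle
      omega
    exact no_nonneg_kernel A hoff hsym hInd hIndef β hβnn hβnz
      (cox_fixed_mulVec_zero A h2 β hcoxβ)
  -- now injectivity
  intro l1 l2 he
  by_contra hne
  simp only at he
  have h3 : (w ^ (l1 - l2)) α = α := by
    have e1 : (w ^ (l1 - l2)) α = (w ^ (-l2)) ((w ^ l1) α) := by
      show _ = ((w ^ (-l2)) * (w ^ l1)) α
      rw [← _root_.zpow_add]
      have : l1 - l2 = -l2 + l1 := by ring
      rw [this]
    rw [e1, he]
    show ((w ^ (-l2)) * (w ^ l2)) α = α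
    rw [← _root_.zpow_add]
    simp
  set d := l1 - l2 with hd
  have hdne : d ≠ 0 := sub_ne_zero.mpr hne
  rcases lt_or_gt_of_ne hdne with hneg | hposd
  · have h4 : (w ^ (-d)) α = α := by
      conv_lhs => rw [← h3]
      show ((w ^ (-d)) * (w ^ d)) α = α
      rw [← _root_.zpow_add]
      simp
    refine key (-d).toNat (by omega) ?_
    rw [Int.toNat_of_nonneg (by omega)]
    exact h4
  · refine key d.toNat (by omega) ?_
    rw [Int.toNat_of_nonneg (by omega)]
    exact h3

end Aux2

/-- if `A` is indecomposable of indefinite type, `w = s 1 ∘ ⋯ ∘ s n` is the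
Coxeter element and `α` is a positive imaginary root, then `w^l α ∈ Δ₊` for every integer
`l`, and `ht(w^l α)` tends to infinity both as `l → +∞` and as `l → -∞`. -/
theorem imaginary_root_coxeter_orbit (n : ℕ) (hn : 1 ≤ n)
    (A : Matrix (Fin n) (Fin n) ℤ) (hA : IsGCM A) (hInd : Indecomposable A hA.2.2)
    (hIndef : IndefiniteType A)
    (α : Fin n → ℤ) (hα : α ∈ posImRoots A hA.1 hA.2.2) :
    (∀ l : ℤ, (cox A hA.1 ^ l) α ∈ posRoots A hA.1 hA.2.2) ∧
      Filter.Tendsto (fun l : ℤ => ht ((cox A hA.1 ^ l) α)) Filter.atTop Filter.atTop ∧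
      Filter.Tendsto (fun l : ℤ => ht ((cox A hA.1 ^ l) α)) Filter.atBot Filter.atTop := by
  obtain ⟨h2, hoff, hsym⟩ := hA
  have hmemIm : ∀ l : ℤ, (cox A h2 ^ l) α ∈ posImRoots A h2 hsym := fun l =>
    cox_zpow_posImRoots A h2 hsym l hα
  have hposl : ∀ l : ℤ, IsPos ((cox A h2 ^ l) α) := fun l =>
    posImRoots_isPos A h2 hoff hsym (hmemIm l)
  refine ⟨fun l => ⟨Or.inl (Or.inr (hmemIm l)), hposl l⟩, ?_, ?_⟩ <;>
  · have hinj := cox_orbit_inj A h2 hoff hsym hInd hIndef hα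
    have hfin : ∀ b : ℤ, {l : ℤ | ht ((cox A h2 ^ l) α) < b}.Finite := by
      intro b
      have hS : (Set.pi Set.univ (fun _ : Fin n => Set.Ico (0:ℤ) b)).Finite :=
        Set.Finite.pi fun _ => Set.finite_Ico 0 b
      apply Set.Finite.subset (hS.preimage (hinj.injOn))
      intro l hl
      simp only [Set.mem_setOf_eq] at hl
      intro c _
      refine ⟨(hposl l).2 c, ?_⟩
      calc ((cox A h2 ^ l) α) c ≤ ∑ u, ((cox A h2 ^ l) α) u :=
            Finset.single_le_sum (fun u _ => (hposl l).2 u) (Finset.mem_univ c)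
      _ = ht ((cox A h2 ^ l) α) := rfl
      _ < b := hl
    have hcof : Filter.Tendsto (fun l : ℤ => ht ((cox A h2 ^ l) α))
        Filter.cofinite Filter.atTop := by
      rw [Filter.tendsto_atTop]
      intro b
      rw [Filter.eventually_cofinite]
      apply Set.Finite.subset (hfin b)
      intro l hl
      simp only [Set.mem_setOf_eq] at hl ⊢
      omega
    first
      | exact hcof.mono_left (by rw [Int.cofinite_eq]; exact le_sup_right)
      | exact hcof.mono_left (by rw [Int.cofinite_eq]; exact le_sup_left)

end KacMoodyPaper
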